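/- arXiv:2205.13062 — 4 statements merged into one kernel-verified Lean document; each statement's English description precedes it below -/
import Mathlib

section
/- For all z, α, β, θ ∈ ℂ with Re α > 0, the series ∑_{n=0}^∞ ((θ)_n/Γ(αn+β))·z^n/n! defining the three-parameter Mittag-Leffler function E^θ_{α,β}(z) is absolutely convergent (the family of terms is summable); hence E^θ_{α,β} is well-defined on all of ℂ. -/
open MeasureTheory Set Filter Topology

noncomputable section

lemma sum_inv_sq_le (x : ℝ) (hx : 1 ≤ x) (n : ℕ) :
    ∑ j ∈ Finset.range n, 1 / (x + j) ^ 2 ≤ 1 / x ^ 2 + 1 / x := by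
  have hx0 : 0 < x := lt_of_lt_of_le one_pos hx
  have key : ∀ m : ℕ, ∑ j ∈ Finset.range (m + 1), 1 / (x + j) ^ 2
      ≤ 1 / x ^ 2 + (1 / x - 1 / (x + m)) := by
    intro m
    induction m with
    | zero => simp
    | succ m ih =>
      rw [Finset.sum_range_succ]
      have h1 : (0:ℝ) < x + m := by positivity
      have h2 : (0:ℝ) < x + (m + 1) := by positivity
      have hfac : 1 / (x + (m + 1 : ℕ)) ^ 2 ≤ 1 / (x + m) - 1 / (x + (m + 1)) := by
        push_cast
        rw [div_sub_div _ _ h1.ne' h2.ne']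
        rw [div_le_div_iff₀ (by positivity) (by positivity)]
        ring_nf
        nlinarith [sq_nonneg (x + m)]
      push_cast at ih hfac ⊢
      linarith
  cases n with
  | zero => positivity
  | succ m =>
    have := key m
    have h1 : (0:ℝ) < x + m := by positivity
    have : 1 / (x + m) ≥ 0 := by positivity
    linarith [key m]

lemma abs_Gamma_lower (s : ℂ) (hx : 1 ≤ s.re) :
    Real.Gamma s.re * Real.exp (-(s.im ^ 2 / 2) * (1 / s.re ^ 2 + 1 / s.re))
      ≤ ‖Complex.Gamma s‖ := by
  set x := s.re
  set y := s.im
  set E := Real.exp (-(y ^ 2 / 2) * (1 / x ^ 2 + 1 / x)) with hE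
  have hx0 : 0 < x := lt_of_lt_of_le one_pos hx
  have htc : Tendsto (fun n => ‖Complex.GammaSeq s n‖) atTop
      (𝓝 (‖Complex.Gamma s‖)) :=
    (continuous_norm.tendsto _).comp (Complex.GammaSeq_tendsto_Gamma s)
  have htr : Tendsto (fun n => Real.GammaSeq x n * E) atTop (𝓝 (Real.Gamma x * E)) :=
    (Real.GammaSeq_tendsto_Gamma x).mul_const E
  refine le_of_tendsto_of_tendsto htr htc ?_
  filter_upwards [eventually_ge_atTop 1] with n hn
  -- per-n inequality
  have hP : (0:ℝ) < ∏ j ∈ Finset.range (n + 1), (x + j) := by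
    apply Finset.prod_pos; intro j _; positivity
  set P := ∏ j ∈ Finset.range (n + 1), (x + j) with hPdef
  set T := ∑ j ∈ Finset.range (n + 1), 1 / (x + j) ^ 2 with hT
  have habs : ‖Complex.GammaSeq s n‖
      = (n : ℝ) ^ x * n.factorial / ∏ j ∈ Finset.range (n + 1), ‖s + j‖ := by
    rw [Complex.GammaSeq, norm_div, norm_mul, norm_prod, Complex.norm_natCast]
    congr 2
    rw [show ((n:ℂ)) = ((n:ℝ):ℂ) by push_cast; ring,
      Complex.norm_cpow_eq_rpow_re_of_pos (by exact_mod_cast hn)]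
  have hQP : ∏ j ∈ Finset.range (n + 1), ‖s + j‖
      ≤ P * Real.exp (y ^ 2 / 2 * T) := by
    have : ∀ j ∈ Finset.range (n + 1),
        ‖s + j‖ ≤ (x + j) * Real.exp (y ^ 2 / 2 * (1 / (x + j) ^ 2)) := by
      intro j _
      have hxj : (0:ℝ) < x + j := by positivity
      have habsj : ‖s + j‖ = Real.sqrt ((x + j) ^ 2 + y ^ 2) := by
        rw [Complex.norm_def, Complex.normSq_apply]
        simp [x, y]
        ring_nf
      rw [habsj]
      rw [show (x + j) * Real.exp (y ^ 2 / 2 * (1 / (x + j) ^ 2))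
          = Real.sqrt (((x + j) * Real.exp (y ^ 2 / 2 * (1 / (x + j) ^ 2))) ^ 2) by
        rw [Real.sqrt_sq (by positivity)]]
      apply Real.sqrt_le_sqrt
      rw [mul_pow, ← Real.exp_nat_mul]
      have h1 : (1:ℝ) + y ^ 2 / (x + j) ^ 2 ≤ Real.exp (2 * (y ^ 2 / 2 * (1 / (x + j) ^ 2))) := by
        have := Real.add_one_le_exp (y ^ 2 / (x + j) ^ 2)
        calc (1:ℝ) + y ^ 2 / (x + j) ^ 2 ≤ Real.exp (y ^ 2 / (x + j) ^ 2) := by linarith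
          _ = Real.exp (2 * (y ^ 2 / 2 * (1 / (x + j) ^ 2))) := by ring_nf
      have h2 : (x + j) ^ 2 * (1 + y ^ 2 / (x + j) ^ 2) = (x + j) ^ 2 + y ^ 2 := by
        field_simp
      nlinarith [sq_nonneg (x + j), Real.exp_pos (2 * (y ^ 2 / 2 * (1 / (x + j) ^ 2)))]
    calc ∏ j ∈ Finset.range (n + 1), ‖s + j‖
        ≤ ∏ j ∈ Finset.range (n + 1), (x + j) * Real.exp (y ^ 2 / 2 * (1 / (x + j) ^ 2)) := by
          apply Finset.prod_le_prod (fun j _ => norm_nonneg _) this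
      _ = P * Real.exp (y ^ 2 / 2 * T) := by
          rw [Finset.prod_mul_distrib, ← Real.exp_sum, ← Finset.mul_sum]
  have hEbound : E ≤ Real.exp (-(y ^ 2 / 2 * T)) := by
    apply Real.exp_le_exp.2
    have := sum_inv_sq_le x hx (n + 1)
    nlinarith [sq_nonneg y, this]
  have hQpos : (0:ℝ) < ∏ j ∈ Finset.range (n + 1), ‖s + j‖ := by
    apply Finset.prod_pos
    intro j _
    have : (0:ℝ) < x + j := by positivity
    have hre : (s + j).re = x + j := by simp [x]
    calc (0:ℝ) < x + j := this
      _ = (s + j).re := hre.symm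
      _ ≤ ‖s + j‖ := Complex.re_le_norm _
  rw [Real.GammaSeq, habs]
  rw [div_mul_eq_mul_div, div_le_div_iff₀ hP hQpos]
  have hnum : (0:ℝ) ≤ (n : ℝ) ^ x * n.factorial := by positivity
  calc (n : ℝ) ^ x * n.factorial * E * (∏ j ∈ Finset.range (n + 1), ‖s + j‖)
      ≤ (n : ℝ) ^ x * n.factorial * Real.exp (-(y ^ 2 / 2 * T)) * (P * Real.exp (y ^ 2 / 2 * T)) := by
        apply mul_le_mul (by apply mul_le_mul_of_nonneg_left hEbound hnum) hQP hQpos.le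
        positivity
    _ = (n : ℝ) ^ x * n.factorial * P := by
        rw [show (n : ℝ) ^ x * n.factorial * Real.exp (-(y ^ 2 / 2 * T)) * (P * Real.exp (y ^ 2 / 2 * T)) = (n : ℝ) ^ x * n.factorial * P * (Real.exp (-(y ^ 2 / 2 * T)) * Real.exp (y ^ 2 / 2 * T)) by ring, ← Real.exp_add]
        simp

lemma gamma_real_growth (a b R : ℝ) (ha : 0 < a) (hR : 1 ≤ R) :
    ∀ᶠ n : ℕ in atTop, R ^ n ≤ Real.Gamma (a * n + b) := by
  set t : ℕ := max 3 ⌈Real.exp (8 * Real.log R / a)⌉₊ with ht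
  have ht3 : 3 ≤ t := le_max_left _ _
  have hlogt : 8 * Real.log R / a ≤ Real.log t := by
    have h1 : Real.exp (8 * Real.log R / a) ≤ (t : ℝ) := by
      calc Real.exp (8 * Real.log R / a) ≤ (⌈Real.exp (8 * Real.log R / a)⌉₊ : ℝ) :=
            Nat.le_ceil _
        _ ≤ (t : ℝ) := by exact_mod_cast Nat.cast_le.2 (le_max_right _ _)
    calc 8 * Real.log R / a = Real.log (Real.exp (8 * Real.log R / a)) :=
          (Real.log_exp _).symm
      _ ≤ Real.log t := Real.log_le_log (Real.exp_pos _) h1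
  have hlogt0 : 0 < Real.log t := by
    apply Real.log_pos
    exact_mod_cast lt_of_lt_of_le (by norm_num) ht3
  have hlogR : 0 ≤ Real.log R := Real.log_nonneg hR
  have hf : Tendsto (fun n : ℕ => a * n + b) atTop atTop := by
    apply tendsto_atTop_add_const_right
    exact tendsto_natCast_atTop_atTop.const_mul_atTop ha
  have hg : Tendsto (fun n : ℕ => (a * 3 / 4) * n) atTop atTop :=
    tendsto_natCast_atTop_atTop.const_mul_atTop (by positivity)
  have hh : Tendsto (fun n : ℕ => (a / 8) * n) atTop atTop :=
    tendsto_natCast_atTop_atTop.const_mul_atTop (by positivity)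
  filter_upwards [hf.eventually_ge_atTop 3, hg.eventually_ge_atTop (2 - b),
    hh.eventually_ge_atTop (t : ℝ)] with n h3 h34 hta
  set x := a * n + b with hxdef
  have hx3 : 3 ≤ x := h3
  have hx0 : 0 ≤ x := by linarith
  set k : ℕ := ⌊x⌋₊ with hk
  have hk3 : 3 ≤ k := Nat.le_floor (by exact_mod_cast hx3)
  have hkx : (k : ℝ) ≤ x := Nat.floor_le hx0
  have hxk : x < k + 1 := Nat.lt_floor_add_one x
  set m : ℕ := k - 1 with hm
  have hkm : k = m + 1 := (Nat.succ_pred_eq_of_pos (by omega)).symm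
  have hmr : (m : ℝ) = (k : ℝ) - 1 := by rw [hkm]; push_cast; ring
  -- m ≥ (a/4) n
  have hmge : (a / 4) * n ≤ (m : ℝ) := by
    have : x - 2 ≤ (m : ℝ) := by rw [hmr]; linarith
    have : (a / 4) * n ≤ x - 2 := by
      have := h34
      simp only [hxdef]
      nlinarith
    linarith [hmr ▸ (by linarith [hxk] : x - 2 ≤ (m:ℝ))]
  have htm : t ≤ m := by
    have : (t : ℝ) ≤ (m : ℝ) := by
      calc (t:ℝ) ≤ (a/8) * n := hta
        _ ≤ (a/4) * n := by nlinarith [Nat.cast_nonneg (α := ℝ) n]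
        _ ≤ m := hmge
    exact_mod_cast this
  -- Gamma x ≥ m !
  have hGam : (m.factorial : ℝ) ≤ Real.Gamma x := by
    have h1 : Real.Gamma (k : ℝ) ≤ Real.Gamma x := by
      apply Real.Gamma_strictMonoOn_Ici.monotoneOn
      · exact Set.mem_Ici.2 (by exact_mod_cast le_trans (by norm_num) hk3)
      · exact Set.mem_Ici.2 (by linarith)
      · exact hkx
    have h2 : Real.Gamma (k : ℝ) = m.factorial := by
      rw [hkm]; push_cast; exact Real.Gamma_nat_eq_factorial m
    linarith [h2 ▸ h1]
  -- factorial ≥ t ^ (m - t)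
  have hfac : ((t : ℝ)) ^ (m - t) ≤ (m.factorial : ℝ) := by
    have h1 := Nat.factorial_mul_pow_sub_le_factorial htm
    have h2 : t ^ (m - t) ≤ m.factorial := le_trans
      (Nat.le_mul_of_pos_left _ (Nat.factorial_pos t)) h1
    exact_mod_cast h2
  -- R ^ n ≤ t ^ (m - t)
  have hkey : R ^ n ≤ (t : ℝ) ^ (m - t) := by
    have hR0 : (0:ℝ) < R := lt_of_lt_of_le one_pos hR
    have ht0 : (0:ℝ) < (t:ℝ) := by exact_mod_cast lt_of_lt_of_le (by norm_num) ht3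
    rw [← Real.log_le_log_iff (by positivity) (by positivity), Real.log_pow, Real.log_pow]
    have hmt : (a / 8) * n ≤ ((m - t : ℕ) : ℝ) := by
      have : ((m - t : ℕ) : ℝ) = (m : ℝ) - (t : ℝ) := by
        rw [Nat.cast_sub htm]
      rw [this]
      linarith
    have h8 : Real.log R ≤ (a / 8) * Real.log t := by
      rw [div_le_iff₀ ha] at hlogt
      nlinarith
    calc (n : ℝ) * Real.log R ≤ (n : ℝ) * ((a / 8) * Real.log t) := by
          apply mul_le_mul_of_nonneg_left h8 (Nat.cast_nonneg n)
      _ = ((a / 8) * n) * Real.log t := by ring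
      _ ≤ ((m - t : ℕ) : ℝ) * Real.log t := by
          apply mul_le_mul_of_nonneg_right hmt hlogt0.le
  calc R ^ n ≤ (t : ℝ) ^ (m - t) := hkey
    _ ≤ (m.factorial : ℝ) := hfac
    _ ≤ Real.Gamma x := hGam

/-- Pochhammer symbol `(θ)ₙ = θ(θ+1)⋯(θ+n−1)`. -/
def cpoch (θ : ℂ) (n : ℕ) : ℂ := ∏ k ∈ Finset.range n, (θ + k)

set_option maxHeartbeats 1000000 in
/-- For all `z, α, β, θ ∈ ℂ` with `Re α > 0`, the series
`∑ (θ)ₙ/Γ(αn+β) · zⁿ/n!` defining the three-parameter Mittag-Leffler function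
`E^θ_{α,β}(z)` is (absolutely) summable; hence `E^θ_{α,β}` is well-defined on `ℂ`.
Here `1/Γ` is the entire reciprocal Gamma function. -/
theorem mittagLeffler_three_param_summable (z α β θ : ℂ) (hα : 0 < α.re) :
    Summable (fun n : ℕ =>
      cpoch θ n * (Complex.Gamma (α * n + β))⁻¹ * z ^ n / (n.factorial : ℂ)) := by
  obtain ⟨c₁, hc₁⟩ : ∃ c₁ : ℝ, c₁ = |α.im| + |β.im| := ⟨_, rfl⟩
  have hc₁0 : 0 ≤ c₁ := by rw [hc₁]; positivity
  obtain ⟨C, hC⟩ : ∃ C : ℝ, C = 2 * c₁ ^ 2 / α.re := ⟨_, rfl⟩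
  have hC0 : 0 ≤ C := by rw [hC]; positivity
  obtain ⟨R, hR⟩ : ∃ R : ℝ,
      R = 2 * ((1 + ‖θ‖) * ‖z‖ * Real.exp C) + 1 := ⟨_, rfl⟩
  have hR1 : 1 ≤ R := by
    have h0 : 0 ≤ (1 + ‖θ‖) * ‖z‖ * Real.exp C := by positivity
    rw [hR]; linarith
  have hRpos : (0:ℝ) < R := lt_of_lt_of_le one_pos hR1
  -- comparison with a geometric series
  apply Summable.of_norm_bounded_eventually (g := fun n : ℕ => (1/2 : ℝ) ^ n)
    (summable_geometric_of_lt_one (by norm_num) (by norm_num))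
  rw [Nat.cofinite_eq_atTop]
  have hf1 : Tendsto (fun n : ℕ => α.re * n + β.re) atTop atTop := by
    apply tendsto_atTop_add_const_right
    exact tendsto_natCast_atTop_atTop.const_mul_atTop hα
  have hf2 : Tendsto (fun n : ℕ => (α.re / 2) * n + β.re) atTop atTop := by
    apply tendsto_atTop_add_const_right
    exact tendsto_natCast_atTop_atTop.const_mul_atTop (by positivity)
  filter_upwards [gamma_real_growth α.re β.re R hα hR1, hf1.eventually_ge_atTop 1,
    hf2.eventually_ge_atTop 0, eventually_ge_atTop 1] with n hgrow hx1 hx2 hn1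
  set s : ℂ := α * n + β with hs
  have hsre : s.re = α.re * n + β.re := by simp [hs, Complex.add_re, Complex.mul_re]
  have hsim : s.im = α.im * n + β.im := by simp [hs, Complex.add_im, Complex.mul_im]
  have hx1' : (1:ℝ) ≤ α.re * n + β.re := hx1
  have hx0 : (0:ℝ) < α.re * n + β.re := lt_of_lt_of_le one_pos hx1'
  have hn1' : (1:ℝ) ≤ (n:ℝ) := by exact_mod_cast hn1
  -- bound on the exponent in the Gamma lower bound
  have hexp : (s.im ^ 2 / 2) * (1 / s.re ^ 2 + 1 / s.re) ≤ C * n := by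
    rw [hsre, hsim]
    set x : ℝ := α.re * n + β.re with hx
    have hy : |α.im * n + β.im| ≤ c₁ * n := by
      calc |α.im * n + β.im| ≤ |α.im * n| + |β.im| := abs_add_le _ _
        _ = |α.im| * n + |β.im| := by rw [abs_mul, Nat.abs_cast]
        _ ≤ |α.im| * n + |β.im| * n := by nlinarith [abs_nonneg β.im]
        _ = c₁ * n := by rw [hc₁]; ring
    have hy2 : (α.im * n + β.im) ^ 2 ≤ (c₁ * n) ^ 2 := by
      nlinarith [sq_abs (α.im * (n:ℝ) + β.im), abs_nonneg (α.im * (n:ℝ) + β.im)]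
    have hxx : 1 / x ^ 2 + 1 / x ≤ 2 / x := by
      have h1 : 1 / x ^ 2 ≤ 1 / x := by
        apply div_le_div_of_nonneg_left one_pos.le hx0
        nlinarith
      have h2 : 2 / x = 1 / x + 1 / x := by ring
      linarith
    have hux : 1 / x ≤ 2 / (α.re * n) := by
      rw [div_le_div_iff₀ hx0 (by positivity)]
      have hxhalf : (α.re / 2) * n ≤ x := by
        have h := hx2
        simp only [hx]
        nlinarith [Nat.cast_nonneg (α := ℝ) n]
      nlinarith
    calc (α.im * n + β.im) ^ 2 / 2 * (1 / x ^ 2 + 1 / x)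
        ≤ (c₁ * n) ^ 2 / 2 * (2 / x) := by
          apply mul_le_mul (by linarith) hxx (by positivity) (by positivity)
      _ ≤ (c₁ * n) ^ 2 / 2 * (2 * (2 / (α.re * n))) := by
          have h3 : 2 / x = 2 * (1 / x) := by ring
          have h4 : 2 / x ≤ 2 * (2 / (α.re * n)) := by
            rw [h3]
            have := mul_le_mul_of_nonneg_left hux (by norm_num : (0:ℝ) ≤ 2)
            linarith
          apply mul_le_mul_of_nonneg_left h4 (by positivity)
      _ = C * n := by
          rw [hC]
          have hn0 : (n:ℝ) ≠ 0 := by positivity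
          field_simp
  -- lower bound for |Γ(s)|
  have hs1 : 1 ≤ s.re := by rw [hsre]; exact hx1
  have hG1 := abs_Gamma_lower s hs1
  have hECpos : (0:ℝ) < Real.exp C ^ n := pow_pos (Real.exp_pos C) n
  have hRnpos : (0:ℝ) < R ^ n := pow_pos hRpos n
  have hG2 : R ^ n * (Real.exp C ^ n)⁻¹ ≤ ‖Complex.Gamma s‖ := by
    have h1 : Real.exp (-(C * n)) ≤ Real.exp (-(s.im ^ 2 / 2) * (1 / s.re ^ 2 + 1 / s.re)) := by
      apply Real.exp_le_exp.2
      nlinarith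
    have h2 : R ^ n ≤ Real.Gamma s.re := by rw [hsre]; exact hgrow
    have h3 : Real.exp (-(C * n)) = (Real.exp C ^ n)⁻¹ := by
      rw [← Real.exp_nat_mul, ← Real.exp_neg]
      ring_nf
    calc R ^ n * (Real.exp C ^ n)⁻¹ = R ^ n * Real.exp (-(C * n)) := by rw [h3]
      _ ≤ Real.Gamma s.re * Real.exp (-(s.im ^ 2 / 2) * (1 / s.re ^ 2 + 1 / s.re)) := by
          apply mul_le_mul h2 h1 (Real.exp_pos _).le (le_trans hRnpos.le h2)
      _ ≤ ‖Complex.Gamma s‖ := hG1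
  have hGpos : 0 < ‖Complex.Gamma s‖ :=
    lt_of_lt_of_le (mul_pos hRnpos (inv_pos.2 hECpos)) hG2
  have hGinv : (‖Complex.Gamma s‖)⁻¹ ≤ Real.exp C ^ n / R ^ n := by
    rw [show Real.exp C ^ n / R ^ n = (R ^ n * (Real.exp C ^ n)⁻¹)⁻¹ by
      rw [mul_inv, inv_inv]; ring]
    exact inv_anti₀ (mul_pos hRnpos (inv_pos.2 hECpos)) hG2
  -- bound on the Pochhammer symbol
  have hpoch : ‖cpoch θ n‖ ≤ (1 + ‖θ‖) ^ n * n.factorial := by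
    rw [cpoch, norm_prod]
    calc ∏ k ∈ Finset.range n, ‖θ + k‖
        ≤ ∏ k ∈ Finset.range n, (1 + ‖θ‖) * ((k:ℝ) + 1) := by
          apply Finset.prod_le_prod (fun k _ => norm_nonneg _)
          intro k _
          calc ‖θ + k‖ ≤ ‖θ‖ + k := by
                refine le_trans (norm_add_le _ _) ?_
                simp
            _ ≤ (1 + ‖θ‖) * ((k:ℝ) + 1) := by
                nlinarith [Nat.cast_nonneg (α := ℝ) k, norm_nonneg θ]
      _ = (1 + ‖θ‖) ^ n * n.factorial := by
          rw [Finset.prod_mul_distrib, Finset.prod_const, Finset.card_range]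
          congr 1
          exact_mod_cast Finset.prod_range_add_one_eq_factorial n
  -- put everything together
  have hnorm : ‖cpoch θ n * (Complex.Gamma (α * n + β))⁻¹ * z ^ n / (n.factorial : ℂ)‖
      = ‖cpoch θ n‖ * (‖Complex.Gamma s‖)⁻¹
        * ‖z‖ ^ n / n.factorial := by
    rw [← hs]
    simp [norm_div, norm_mul, norm_inv, norm_pow, Complex.norm_natCast]
  rw [hnorm]
  have hfacpos : (0:ℝ) < n.factorial := by exact_mod_cast n.factorial_pos
  calc ‖cpoch θ n‖ * (‖Complex.Gamma s‖)⁻¹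
        * ‖z‖ ^ n / n.factorial
      ≤ ((1 + ‖θ‖) ^ n * n.factorial) * (Real.exp C ^ n / R ^ n)
        * ‖z‖ ^ n / n.factorial := by
        gcongr
    _ = ((1 + ‖θ‖) * Real.exp C * ‖z‖ / R) ^ n := by
        rw [div_pow, mul_pow, mul_pow]
        field_simp
    _ ≤ (1/2 : ℝ) ^ n := by
        apply pow_le_pow_left₀ (by positivity)
        rw [div_le_div_iff₀ hRpos (by norm_num), hR]
        nlinarith [norm_nonneg θ, norm_nonneg z, Real.exp_pos C]

end
end

section
/- Let α, β, θ, ω ∈ ℂ with Re α > 0 and Re β > 0, let a < b be reals, and let f : [a,b] → ℂ be continuous. Then for every t ∈ [a,b], (𝕀^θ_{α,β,ω;a}f)(t) = ∑_{n=0}^∞ ((θ)_n ω^n/n!) (I^{αn+β}_a f)(t), the series on the right being convergent (series formula for the Prabhakar integral in terms of Riemann–Liouville integrals). -/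
open MeasureTheory Set Filter Topology

noncomputable section

/-- Three-parameter (Prabhakar) Mittag-Leffler function; `1/Γ` is used as an entire function. -/
def mlThree (α β θ : ℂ) (z : ℂ) : ℂ :=
  ∑' n : ℕ, cpoch θ n * (Complex.Gamma (α * n + β))⁻¹ * z ^ n / (n.factorial : ℂ)

/-- Prabhakar fractional integral with base point `a`:
`(𝕀^θ_{α,β,ω;a} f)(t) = ∫_a^t (t−s)^{β−1} E^θ_{α,β}(ω(t−s)^α) f(s) ds`. -/
def prabI (α β θ ω : ℂ) (a : ℝ) (f : ℝ → ℂ) (t : ℝ) : ℂ :=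
  ∫ s in a..t, ((t - s : ℝ) : ℂ) ^ (β - 1) * mlThree α β θ (ω * ((t - s : ℝ) : ℂ) ^ α) * f s

/-- `m = ⌊Re β⌋ + 1`. -/
def mOrd (β : ℂ) : ℕ := ⌊β.re⌋.toNat + 1

/-- Riemann–Liouville-type Prabhakar derivative:
`(D^{RL,θ}_{α,β,ω;a} f)(t) = (d/dt)^m (𝕀^{−θ}_{α,m−β,ω;a} f)(t)` with `m = ⌊Re β⌋+1`. -/
def prabDRL (α β θ ω : ℂ) (a : ℝ) (f : ℝ → ℂ) : ℝ → ℂ :=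
  iteratedDeriv (mOrd β) (prabI α ((mOrd β : ℕ) - β) (-θ) ω a f)

/-- Caputo-type Prabhakar derivative, via the `m`-th derivative of `f`:
`(D^{C,θ}_{α,β,ω;a} f)(t) = (𝕀^{−θ}_{α,m−β,ω;a} f^{(m)})(t)`. -/
def prabDC (α β θ ω : ℂ) (a : ℝ) (f : ℝ → ℂ) : ℝ → ℂ :=
  prabI α ((mOrd β : ℕ) - β) (-θ) ω a (iteratedDeriv (mOrd β) f)

/-- Regularized (Caputo-type) Prabhakar derivative of a continuous function:
`(D^{C,θ}_{α,β,ω;a} f)(t) = (D^{RL,θ}_{α,β,ω;a}[f − ∑_{j<m} f^{(j)}(a)(·−a)^j/j!])(t)`,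
where `f^{(j)}(a)` is the (right-sided) `j`-th derivative at `a`. -/
def prabDReg (α β θ ω : ℂ) (a : ℝ) (f : ℝ → ℂ) : ℝ → ℂ :=
  prabDRL α β θ ω a
    (fun t => f t - ∑ j ∈ Finset.range (mOrd β),
      iteratedDerivWithin j f (Set.Ici a) a / (j.factorial : ℂ) * ((t - a : ℝ) : ℂ) ^ j)

/-- Riemann–Liouville fractional integral
`(I^β_a f)(t) = (1/Γ(β)) ∫_a^t (t−s)^{β−1} f(s) ds`. -/
def rlI (β : ℂ) (a : ℝ) (f : ℝ → ℂ) (t : ℝ) : ℂ :=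
  (Complex.Gamma β)⁻¹ * ∫ s in a..t, ((t - s : ℝ) : ℂ) ^ (β - 1) * f s

/-- The operator `(A w)(t) = ∑_{i=1}^m σᵢ(t) · (𝕀^{θ₀−θᵢ}_{α,β₀−βᵢ,ω;0} w)(t)`. -/
def opA (α ω : ℂ) (β θ : ℕ → ℂ) (m : ℕ) (σ : ℕ → ℝ → ℂ) (w : ℝ → ℂ) : ℝ → ℂ :=
  fun t => ∑ i ∈ Finset.Icc 1 m, σ i t * prabI α (β 0 - β i) (θ 0 - θ i) ω 0 w t

namespace PrabAux

/-- Real Gamma is bounded below under nonnegative-integer shifts (for `y ≥ 1`). -/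
lemma gamma_add_nat_ge (p : ℕ) {y : ℝ} (hy : 1 ≤ y) :
    Real.Gamma y ≤ Real.Gamma (y + p) := by
  induction p with
  | zero => simp
  | succ p ih =>
    have h1 : (1:ℝ) ≤ y + p := le_add_of_le_of_nonneg hy (by positivity)
    have h0 : y + (p:ℝ) ≠ 0 := by linarith
    have hG : Real.Gamma (y + p + 1) = (y + p) * Real.Gamma (y + p) := Real.Gamma_add_one h0
    have hcast : y + ((p+1 : ℕ) : ℝ) = y + p + 1 := by push_cast; ring
    rw [hcast, hG]
    calc Real.Gamma y ≤ Real.Gamma (y + p) := ih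
      _ ≤ (y + p) * Real.Gamma (y + p) :=
        le_mul_of_one_le_left (Real.Gamma_pos_of_pos (by linarith)).le h1

/-- Log-convexity interpolation: `x Γ(x) ≤ Γ(x+ρ) (x+ρ)^(1-ρ)` for `0 < ρ ≤ 1`. -/
lemma gamma_interp {ρ x : ℝ} (hρ0 : 0 < ρ) (hρ1 : ρ ≤ 1) (hx : 0 < x) :
    x * Real.Gamma x ≤ Real.Gamma (x + ρ) * (x + ρ) ^ (1 - ρ) := by
  have hxρ : 0 < x + ρ := by linarith
  have hxρ1 : 0 < x + ρ + 1 := by linarith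
  have key := Real.convexOn_log_Gamma.2 (mem_Ioi.mpr hxρ) (mem_Ioi.mpr hxρ1)
    hρ0.le (by linarith : (0:ℝ) ≤ 1 - ρ) (by ring)
  simp only [smul_eq_mul, Function.comp_apply] at key
  have hcomb : ρ * (x + ρ) + (1 - ρ) * (x + ρ + 1) = x + 1 := by ring
  rw [hcomb] at key
  have hG1 : Real.Gamma (x + 1) = x * Real.Gamma x := Real.Gamma_add_one hx.ne'
  have hG2 : Real.Gamma (x + ρ + 1) = (x + ρ) * Real.Gamma (x + ρ) :=
    Real.Gamma_add_one hxρ.ne'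
  have hp1 : 0 < Real.Gamma (x + ρ) := Real.Gamma_pos_of_pos hxρ
  have hpx : 0 < Real.Gamma x := Real.Gamma_pos_of_pos hx
  rw [hG1, hG2] at key
  rw [Real.log_mul hxρ.ne' hp1.ne'] at key
  -- key : log (x * Gamma x) ≤ ρ * log (Gamma (x+ρ)) + (1-ρ) * (log (x+ρ) + log (Gamma (x+ρ)))
  have key2 : Real.log (x * Real.Gamma x) ≤
      Real.log (Real.Gamma (x + ρ)) + (1 - ρ) * Real.log (x + ρ) := by nlinarith [key]
  have hrw : Real.Gamma (x + ρ) * (x + ρ) ^ (1 - ρ) =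
      Real.exp (Real.log (Real.Gamma (x + ρ)) + (1 - ρ) * Real.log (x + ρ)) := by
    rw [Real.exp_add, Real.exp_log hp1, ← Real.exp_log hxρ, ← Real.exp_mul,
      Real.exp_log hxρ]
    ring_nf
  rw [hrw]
  calc x * Real.Gamma x = Real.exp (Real.log (x * Real.Gamma x)) :=
        (Real.exp_log (by positivity)).symm
    _ ≤ _ := Real.exp_le_exp.mpr key2

/-- `Γ(x+r)/Γ(x) → ∞` along `x = r n + b`. -/
lemma gamma_ratio_eventually {r b : ℝ} (hr : 0 < r) (hb : 0 < b) (K : ℝ) :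
    ∀ᶠ n : ℕ in atTop, K * Real.Gamma (r * n + b) ≤ Real.Gamma (r * n + b + r) := by
  -- decompose r = p + ρ with ρ ∈ (0,1]
  set p : ℕ := (⌈r⌉ - 1).toNat with hp
  have hceil : (1:ℤ) ≤ ⌈r⌉ := by exact_mod_cast Int.ceil_pos.mpr hr
  have hpcast : (p:ℝ) = (⌈r⌉:ℝ) - 1 := by
    have h' : ((p : ℕ) : ℤ) = ⌈r⌉ - 1 := Int.toNat_of_nonneg (by omega)
    exact_mod_cast congrArg (fun z : ℤ => (z : ℝ)) h'
  set ρ : ℝ := r - p with hρ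
  have hρ0 : 0 < ρ := by
    have := Int.ceil_lt_add_one r
    rw [hρ, hpcast]; linarith
  have hρ1 : ρ ≤ 1 := by
    have := Int.le_ceil r
    rw [hρ, hpcast]; linarith
  -- the key pointwise bound for x ≥ 1 with x^ρ ≥ 2K
  have key : ∀ x : ℝ, 1 ≤ x → 2 * K ≤ x ^ ρ → K * Real.Gamma x ≤ Real.Gamma (x + r) := by
    intro x hx1 hxρ
    have hx : 0 < x := by linarith
    have hpx : 0 < Real.Gamma x := Real.Gamma_pos_of_pos hx
    have hxρpos : 0 < x + ρ := by linarith
    have h1 : Real.Gamma (x + ρ) ≤ Real.Gamma (x + r) := by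
      have : x + r = (x + ρ) + p := by rw [hρ]; ring
      rw [this]
      exact gamma_add_nat_ge p (by linarith)
    have h2 : x * Real.Gamma x ≤ Real.Gamma (x + ρ) * (x + ρ) ^ (1 - ρ) :=
      gamma_interp hρ0 hρ1 hx
    have h3 : (x + ρ) ^ (1 - ρ) ≤ 2 * x ^ (1 - ρ) := by
      calc (x + ρ) ^ (1 - ρ) ≤ (2 * x) ^ (1 - ρ) :=
            Real.rpow_le_rpow hxρpos.le (by linarith) (by linarith)
        _ = 2 ^ (1 - ρ) * x ^ (1 - ρ) := Real.mul_rpow (by norm_num) hx.le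
        _ ≤ 2 * x ^ (1 - ρ) := by
            have : (2:ℝ) ^ (1 - ρ) ≤ 2 ^ (1:ℝ) :=
              Real.rpow_le_rpow_of_exponent_le (by norm_num) (by linarith)
            have h2pos : (0:ℝ) ≤ x ^ (1 - ρ) := (Real.rpow_pos_of_pos hx _).le
            rw [Real.rpow_one] at this
            nlinarith
    have hxsplit : x = x ^ ρ * x ^ (1 - ρ) := by
      rw [← Real.rpow_add hx]; norm_num
    have hxrp : 0 < x ^ (1 - ρ) := Real.rpow_pos_of_pos hx _
    have hGxρ : 0 < Real.Gamma (x + ρ) := Real.Gamma_pos_of_pos hxρpos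
    -- 2K x^{1-ρ} Γx ≤ x^ρ x^{1-ρ} Γ x = x Γ x ≤ Γ(x+ρ)(x+ρ)^{1-ρ} ≤ 2 x^{1-ρ} Γ(x+ρ)
    have h4 : 2 * K * (x ^ (1 - ρ)) * Real.Gamma x ≤
        2 * (x ^ (1 - ρ)) * Real.Gamma (x + ρ) := by
      nlinarith [mul_le_mul_of_nonneg_right hxρ (mul_nonneg hxrp.le hpx.le),
        mul_le_mul_of_nonneg_left h3 hGxρ.le, hxsplit, h2]
    have h5 : K * Real.Gamma x ≤ Real.Gamma (x + ρ) := by nlinarith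
    linarith
  -- eventual conditions
  have htop : Tendsto (fun n : ℕ => r * n + b) atTop atTop := by
    apply tendsto_atTop_add_const_right
    exact Tendsto.const_mul_atTop hr tendsto_natCast_atTop_atTop
  have h1 : ∀ᶠ n : ℕ in atTop, 1 ≤ r * n + b := htop.eventually_ge_atTop 1
  have h2 : ∀ᶠ n : ℕ in atTop, 2 * K ≤ (r * n + b) ^ ρ :=
    (((tendsto_rpow_atTop hρ0).comp htop).eventually_ge_atTop (2 * K))
  filter_upwards [h1, h2] with n hn1 hn2
  exact key _ hn1 hn2

/-- Norm bound on the complex Beta integral by the real Beta function. -/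
lemma beta_norm_le {u v : ℂ} (hu : 0 < u.re) (hv : 0 < v.re) :
    ‖Complex.betaIntegral u v‖ ≤
      Real.Gamma u.re * Real.Gamma v.re / Real.Gamma (u.re + v.re) := by
  set B : ℝ := ∫ x in Ioo (0:ℝ) 1, x ^ (u.re - 1) * (1 - x) ^ (v.re - 1) with hB
  -- step 1: ‖betaIntegral u v‖ ≤ B
  have step1 : ‖Complex.betaIntegral u v‖ ≤ B := by
    rw [Complex.betaIntegral, intervalIntegral.integral_of_le zero_le_one,
      MeasureTheory.integral_Ioc_eq_integral_Ioo]
    refine le_trans (norm_integral_le_integral_norm _) (le_of_eq ?_)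
    refine setIntegral_congr_fun measurableSet_Ioo (fun x hx => ?_)
    have hx0 : (0:ℝ) < x := hx.1
    have hx1 : (0:ℝ) < 1 - x := by have := hx.2; linarith
    rw [norm_mul]
    rw [Complex.norm_cpow_eq_rpow_re_of_pos hx0, ]
    have h1x : (1 - (x:ℂ)) = ((1 - x : ℝ) : ℂ) := by push_cast; ring
    rw [h1x, Complex.norm_cpow_eq_rpow_re_of_pos hx1]
    simp [Complex.sub_re, Complex.one_re]
  -- step 2: B is the real Beta value
  have step2 : Complex.betaIntegral (u.re : ℂ) (v.re : ℂ) = (B : ℂ) := by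
    rw [Complex.betaIntegral, intervalIntegral.integral_of_le zero_le_one,
      MeasureTheory.integral_Ioc_eq_integral_Ioo, hB]
    calc ∫ x in Ioo (0:ℝ) 1, (x:ℂ) ^ ((u.re:ℂ) - 1) * (1 - (x:ℂ)) ^ ((v.re:ℂ) - 1)
        = ∫ x in Ioo (0:ℝ) 1, ((x ^ (u.re - 1) * (1 - x) ^ (v.re - 1) : ℝ) : ℂ) := by
          refine setIntegral_congr_fun measurableSet_Ioo (fun x hx => ?_)
          have hx0 : (0:ℝ) < x := hx.1
          have hx1 : (0:ℝ) < 1 - x := by have := hx.2; linarith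
          have h1x : (1 - (x:ℂ)) = ((1 - x : ℝ) : ℂ) := by push_cast; ring
          rw [h1x, show ((u.re:ℂ) - 1) = ((u.re - 1 : ℝ) : ℂ) by push_cast; ring,
            show ((v.re:ℂ) - 1) = ((v.re - 1 : ℝ) : ℂ) by push_cast; ring,
            ← Complex.ofReal_cpow hx0.le, ← Complex.ofReal_cpow hx1.le,
            ← Complex.ofReal_mul]
      _ = _ := _root_.integral_ofReal
  -- step 3: Gamma identity
  have h3 := Complex.Gamma_mul_Gamma_eq_betaIntegral
    (s := (u.re : ℂ)) (t := (v.re : ℂ)) (by simpa using hu) (by simpa using hv)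
  rw [step2, Complex.Gamma_ofReal, Complex.Gamma_ofReal, ← Complex.ofReal_add,
    Complex.Gamma_ofReal, ← Complex.ofReal_mul, ← Complex.ofReal_mul] at h3
  have h3' : Real.Gamma u.re * Real.Gamma v.re = Real.Gamma (u.re + v.re) * B := by
    exact_mod_cast h3
  have hGpos : 0 < Real.Gamma (u.re + v.re) := Real.Gamma_pos_of_pos (by linarith)
  have hBeq : B = Real.Gamma u.re * Real.Gamma v.re / Real.Gamma (u.re + v.re) := by
    field_simp [h3']; linarith [h3', mul_comm B (Real.Gamma (u.re + v.re))]
  linarith [step1, hBeq ▸ step1]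

/-- Lower bound for `‖Γ(αn+β)‖`. -/
lemma gamma_lower (α β : ℂ) (hα : 0 < α.re) (hβ : 0 < β.re) (n : ℕ) :
    ‖Complex.Gamma β‖ / Real.Gamma β.re *
        (‖Complex.Gamma α‖ / Real.Gamma α.re) ^ n * Real.Gamma (α.re * n + β.re)
      ≤ ‖Complex.Gamma (α * n + β)‖ := by
  induction n with
  | zero =>
    have h : Real.Gamma β.re ≠ 0 := (Real.Gamma_pos_of_pos hβ).ne'
    simp [div_mul_cancel₀, h, div_mul_cancel₀ (‖Complex.Gamma β‖) h]
  | succ n ih =>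
    set z : ℂ := α * n + β with hz
    have hzre : z.re = α.re * n + β.re := by
      simp [hz, Complex.add_re, Complex.mul_re]
    have hzpos : 0 < z.re := by rw [hzre]; positivity
    set x : ℝ := α.re * n + β.re with hx
    set r : ℝ := α.re with hrdef
    have hxpos : 0 < x := by positivity
    -- Gamma positivity facts
    have hGx : 0 < Real.Gamma x := Real.Gamma_pos_of_pos hxpos
    have hGr : 0 < Real.Gamma r := Real.Gamma_pos_of_pos hα
    have hGxr : 0 < Real.Gamma (x + r) := Real.Gamma_pos_of_pos (by positivity)
    have hGb : 0 < Real.Gamma β.re := Real.Gamma_pos_of_pos hβ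
    have hnGα : 0 < ‖Complex.Gamma α‖ :=
      norm_pos_iff.mpr (Complex.Gamma_ne_zero_of_re_pos hα)
    have hnGβ : 0 < ‖Complex.Gamma β‖ :=
      norm_pos_iff.mpr (Complex.Gamma_ne_zero_of_re_pos hβ)
    have hnGz : 0 < ‖Complex.Gamma z‖ :=
      norm_pos_iff.mpr (Complex.Gamma_ne_zero_of_re_pos hzpos)
    -- key identity
    have hid := Complex.Gamma_mul_Gamma_eq_betaIntegral hzpos hα
    have hidn : ‖Complex.Gamma z‖ * ‖Complex.Gamma α‖ =
        ‖Complex.Gamma (z + α)‖ * ‖Complex.betaIntegral z α‖ := by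
      rw [← norm_mul, ← norm_mul, hid]
    have hbeta := beta_norm_le hzpos hα
    rw [hzre] at hbeta
    have hαre : (α.re : ℝ) = r := rfl
    -- ‖Γ(z+α)‖ ≥ ‖Γz‖‖Γα‖ Γ(x+r)/(Γx Γr)
    have hkey : ‖Complex.Gamma z‖ * ‖Complex.Gamma α‖ * Real.Gamma (x + r) ≤
        ‖Complex.Gamma (z + α)‖ * (Real.Gamma x * Real.Gamma r) := by
      have h2 : ‖Complex.Gamma (z + α)‖ * ‖Complex.betaIntegral z α‖ * Real.Gamma (x+r) ≤
          ‖Complex.Gamma (z + α)‖ * (Real.Gamma x * Real.Gamma r / Real.Gamma (x+r)) *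
            Real.Gamma (x+r) := by
        have := mul_le_mul_of_nonneg_left hbeta (norm_nonneg (Complex.Gamma (z+α)))
        exact mul_le_mul_of_nonneg_right this hGxr.le
      rw [← hidn] at h2
      calc ‖Complex.Gamma z‖ * ‖Complex.Gamma α‖ * Real.Gamma (x + r) ≤ _ := h2
        _ = ‖Complex.Gamma (z + α)‖ * (Real.Gamma x * Real.Gamma r) := by
          field_simp
    -- now conclude
    have hcast : α * ((n:ℂ) + 1) + β = z + α := by rw [hz]; ring
    have hxcast : α.re * ((n:ℕ)+1 : ℕ) + β.re = x + r := by push_cast; rw [hx]; ring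
    rw [show ((n+1 : ℕ) : ℂ) = (n:ℂ) + 1 by push_cast; ring, hcast, hxcast]
    -- goal: C * q^(n+1) * Γ(x+r) ≤ ‖Γ(z+α)‖
    set C := ‖Complex.Gamma β‖ / Real.Gamma β.re with hC
    set q := ‖Complex.Gamma α‖ / Real.Gamma r with hq
    have hCpos : 0 < C := by positivity
    have hqpos : 0 < q := by positivity
    have ih' : C * q ^ n * Real.Gamma x ≤ ‖Complex.Gamma z‖ := ih
    -- C q^{n+1} Γ(x+r) * (Γx Γr) = (C q^n Γx) * ‖Γα‖ * Γ(x+r)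
    have hexpand : C * q ^ (n+1) * Real.Gamma (x + r) * (Real.Gamma x * Real.Gamma r)
        = (C * q ^ n * Real.Gamma x) * ‖Complex.Gamma α‖ * Real.Gamma (x + r) := by
      rw [pow_succ, hq]; field_simp
    have hle : C * q ^ (n+1) * Real.Gamma (x + r) * (Real.Gamma x * Real.Gamma r)
        ≤ ‖Complex.Gamma (z + α)‖ * (Real.Gamma x * Real.Gamma r) := by
      rw [hexpand]
      calc (C * q ^ n * Real.Gamma x) * ‖Complex.Gamma α‖ * Real.Gamma (x + r)
          ≤ ‖Complex.Gamma z‖ * ‖Complex.Gamma α‖ * Real.Gamma (x + r) := by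
            have := mul_le_mul_of_nonneg_right ih' hnGα.le
            exact mul_le_mul_of_nonneg_right this hGxr.le
        _ ≤ _ := hkey
    exact le_of_mul_le_mul_right hle (by positivity)

lemma aux_summable (θ : ℂ) {r b : ℝ} (hr : 0 < r) (hb : 0 < b) {Q : ℝ} (hQ : 0 ≤ Q) :
    Summable (fun n : ℕ =>
      ‖cpoch θ n‖ * Q ^ n / ((n.factorial : ℝ) * Real.Gamma (r * n + b))) := by
  set K : ℝ := 2 * (‖θ‖ + 1) * (Q + 1) with hK
  have hKpos : 0 < K := by positivity
  apply summable_of_ratio_norm_eventually_le (r := 1/2) (by norm_num)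
  filter_upwards [gamma_ratio_eventually hr hb K] with n hn
  set G : ℝ := Real.Gamma (r * n + b) with hG
  set G' : ℝ := Real.Gamma (r * (n+1 : ℕ) + b) with hG'
  have hGpos : 0 < G := Real.Gamma_pos_of_pos (by positivity)
  have hG'eq : r * ((n+1 : ℕ) : ℝ) + b = r * n + b + r := by push_cast; ring
  have hG'pos : 0 < G' := by rw [hG', hG'eq]; exact Real.Gamma_pos_of_pos (by positivity)
  have hKG : K * G ≤ G' := by rw [hG', hG'eq]; exact hn
  have hcp : ‖cpoch θ (n+1)‖ = ‖cpoch θ n‖ * ‖θ + n‖ := by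
    rw [cpoch, Finset.prod_range_succ, norm_mul]; rfl
  have hθn : ‖θ + (n:ℂ)‖ ≤ (‖θ‖ + 1) * (n + 1) := by
    calc ‖θ + (n:ℂ)‖ ≤ ‖θ‖ + ‖(n:ℂ)‖ := norm_add_le _ _
      _ = ‖θ‖ + n := by rw [Complex.norm_natCast]
      _ ≤ (‖θ‖ + 1) * (n + 1) := by nlinarith [norm_nonneg θ]
  -- norms of nonneg reals
  have hterm : ∀ m : ℕ, 0 ≤ ‖cpoch θ m‖ * Q ^ m / ((m.factorial : ℝ) * Real.Gamma (r * m + b)) := by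
    intro m
    have := Real.Gamma_pos_of_pos (show (0:ℝ) < r * m + b by positivity)
    positivity
  rw [Real.norm_of_nonneg (hterm (n+1)), Real.norm_of_nonneg (hterm n)]
  have hfac : ((n+1).factorial : ℝ) = (n+1) * n.factorial := by
    rw [Nat.factorial_succ]; push_cast; ring
  have hfacpos : (0:ℝ) < n.factorial := by positivity
  rw [hcp, hfac]
  rw [mul_div_assoc']
  rw [div_le_div_iff₀ (by positivity) (by positivity)]
  -- LHS: ‖cpoch n‖ ‖θ+n‖ Q^{n+1} * (n! G) ≤ 1/2 ‖cpoch n‖ Q^n * ((n+1) n! G')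
  have key : ‖θ + (n:ℂ)‖ * Q * G * 2 ≤ (n+1) * G' := by
    have h1 : ‖θ + (n:ℂ)‖ * Q * G * 2 ≤ (‖θ‖+1) * (n+1) * Q * G * 2 := by
      have := mul_le_mul_of_nonneg_right hθn hQ
      nlinarith [hGpos.le]
    have h2 : (‖θ‖+1) * (n+1) * Q * G * 2 ≤ (n+1) * (K * G) := by
      rw [hK]
      have hQK : 2 * ((‖θ‖+1) * Q) ≤ 2 * (‖θ‖ + 1) * (Q + 1) := by nlinarith [norm_nonneg θ]
      nlinarith [mul_le_mul_of_nonneg_left hQK (by positivity : (0:ℝ) ≤ ((n:ℝ)+1)*G)]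
    have h3 : ((n:ℝ)+1) * (K * G) ≤ (n+1) * G' := by
      have : (0:ℝ) ≤ (n:ℝ)+1 := by positivity
      nlinarith
    linarith
  calc ‖cpoch θ n‖ * ‖θ + (n:ℂ)‖ * Q ^ (n+1) * ((n.factorial : ℝ) * G)
      = (‖cpoch θ n‖ * Q ^ n * (n.factorial : ℝ)) * (‖θ + (n:ℂ)‖ * Q * G) := by ring
    _ ≤ (‖cpoch θ n‖ * Q ^ n * (n.factorial : ℝ)) * ((n+1) * G' / 2) := by
        apply mul_le_mul_of_nonneg_left _ (by positivity)
        linarith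
    _ = 1/2 * (‖cpoch θ n‖ * Q ^ n) * (((n:ℝ)+1) * (n.factorial : ℝ) * G') := by ring

/-- Master summability of the Mittag-Leffler coefficient series. -/
lemma master_summable (α β θ : ℂ) (hα : 0 < α.re) (hβ : 0 < β.re) {R : ℝ} (hR : 0 ≤ R) :
    Summable (fun n : ℕ =>
      ‖cpoch θ n‖ * ‖(Complex.Gamma (α * n + β))⁻¹‖ * R ^ n / (n.factorial : ℝ)) := by
  set q : ℝ := ‖Complex.Gamma α‖ / Real.Gamma α.re with hq
  set D : ℝ := ‖Complex.Gamma β‖ / Real.Gamma β.re with hD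
  have hGa : 0 < Real.Gamma α.re := Real.Gamma_pos_of_pos hα
  have hGb : 0 < Real.Gamma β.re := Real.Gamma_pos_of_pos hβ
  have hnGα : 0 < ‖Complex.Gamma α‖ :=
    norm_pos_iff.mpr (Complex.Gamma_ne_zero_of_re_pos hα)
  have hnGβ : 0 < ‖Complex.Gamma β‖ :=
    norm_pos_iff.mpr (Complex.Gamma_ne_zero_of_re_pos hβ)
  have hqpos : 0 < q := by positivity
  have hDpos : 0 < D := by positivity
  set Q : ℝ := R / q with hQdef
  have hQ : 0 ≤ Q := by positivity
  have hsum := (aux_summable θ hα hβ hQ).mul_left D⁻¹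
  apply Summable.of_nonneg_of_le _ _ hsum
  · intro n; positivity
  · intro n
    set G : ℝ := Real.Gamma (α.re * n + β.re) with hG
    have hGpos : 0 < G := Real.Gamma_pos_of_pos (by positivity)
    have hlow : D * q ^ n * G ≤ ‖Complex.Gamma (α * n + β)‖ := gamma_lower α β hα hβ n
    have hzpos : (0:ℝ) < D * q ^ n * G := by positivity
    have hinv : ‖(Complex.Gamma (α * n + β))⁻¹‖ ≤ (D * q ^ n * G)⁻¹ := by
      rw [norm_inv]
      exact inv_anti₀ hzpos hlow
    have hfacpos : (0:ℝ) < n.factorial := by positivity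
    calc ‖cpoch θ n‖ * ‖(Complex.Gamma (α * n + β))⁻¹‖ * R ^ n / (n.factorial : ℝ)
        ≤ ‖cpoch θ n‖ * (D * q ^ n * G)⁻¹ * R ^ n / (n.factorial : ℝ) := by
          gcongr
      _ = D⁻¹ * (‖cpoch θ n‖ * Q ^ n / ((n.factorial : ℝ) * G)) := by
          simp only [hQdef, div_pow, mul_inv, div_eq_mul_inv]
          ring

lemma mlThree_summable (α β θ : ℂ) (hα : 0 < α.re) (hβ : 0 < β.re) (z : ℂ) :
    Summable (fun n : ℕ =>
      cpoch θ n * (Complex.Gamma (α * n + β))⁻¹ * z ^ n / (n.factorial : ℂ)) := by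
  apply Summable.of_norm
  have h := master_summable α β θ hα hβ (norm_nonneg z)
  convert h using 2 with n
  simp [norm_mul, norm_div, norm_pow]

lemma mlThree_hasSum (α β θ : ℂ) (hα : 0 < α.re) (hβ : 0 < β.re) (z : ℂ) :
    HasSum (fun n : ℕ =>
      cpoch θ n * (Complex.Gamma (α * n + β))⁻¹ * z ^ n / (n.factorial : ℂ))
      (mlThree α β θ z) :=
  (mlThree_summable α β θ hα hβ z).hasSum

end PrabAux

/-- Series formula for the Prabhakar integral in terms of Riemann–Liouville integrals:
`(𝕀^θ_{α,β,ω;a} f)(t) = ∑_{n=0}^∞ ((θ)ₙ ωⁿ/n!) (I^{αn+β}_a f)(t)`, the series converging. -/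
theorem prabI_eq_series_of_rlI (α β θ ω : ℂ) (hα : 0 < α.re) (hβ : 0 < β.re)
    (a b : ℝ) (hab : a < b) (f : ℝ → ℂ) (hf : ContinuousOn f (Set.Icc a b)) :
    ∀ t ∈ Set.Icc a b,
      HasSum (fun n : ℕ => cpoch θ n * ω ^ n / (n.factorial : ℂ) * rlI (α * n + β) a f t)
        (prabI α β θ ω a f t) := by
  intro t ht
  rcases eq_or_lt_of_le ht.1 with rfl | hat
  · simp only [rlI, prabI, intervalIntegral.integral_same, mul_zero]
    simpa using hasSum_zero
  -- now a < t
  have hta : 0 < t - a := by linarith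
  obtain ⟨M₀, hM₀⟩ := IsCompact.exists_bound_of_continuousOn isCompact_Icc hf
  set M : ℝ := max M₀ 0 with hM
  have hMnn : 0 ≤ M := le_max_right _ _
  have hMb : ∀ s ∈ Set.Icc a b, ‖f s‖ ≤ M := fun s hs => (hM₀ s hs).trans (le_max_left _ _)
  have hsub : Set.Ioo a t ⊆ Set.Icc a b := fun s hs => ⟨hs.1.le, le_trans hs.2.le ht.2⟩
  set coef : ℕ → ℂ := fun n => cpoch θ n * (Complex.Gamma (α * n + β))⁻¹ * ω ^ n /
    (n.factorial : ℂ) with hcoef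
  set F : ℕ → ℝ → ℂ := fun n s =>
    coef n * (((t - s : ℝ) : ℂ) ^ (α * n + β - 1) * f s) with hF
  have hre : ∀ n : ℕ, (α * n + β - 1).re = α.re * n + β.re - 1 := by
    intro n
    simp [Complex.add_re, Complex.sub_re, Complex.mul_re, Complex.one_re]
  have hrepos : ∀ n : ℕ, (0:ℝ) < α.re * n + β.re := fun n => by positivity
  have hfm : MeasureTheory.AEStronglyMeasurable f
      (MeasureTheory.volume.restrict (Set.Ioo a t)) :=
    (hf.mono hsub).aestronglyMeasurable measurableSet_Ioo
  have hfbd : ∀ᵐ s ∂(MeasureTheory.volume.restrict (Set.Ioo a t)), ‖f s‖ ≤ M :=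
    (MeasureTheory.ae_restrict_iff' measurableSet_Ioo).mpr
      (Filter.Eventually.of_forall fun s hs => hMb s (hsub hs))
  have hker : ∀ n : ℕ, MeasureTheory.IntegrableOn
      (fun s => ((t - s : ℝ) : ℂ) ^ (α * n + β - 1)) (Set.Ioo a t) := by
    intro n
    have h1 : IntervalIntegrable (fun x : ℝ => (x : ℂ) ^ (α * n + β - 1))
        MeasureTheory.volume 0 (t - a) :=
      intervalIntegral.intervalIntegrable_cpow' (by rw [hre n]; nlinarith [hrepos n])
    have h2 := (h1.comp_sub_left t).symm
    simp only [sub_zero, sub_sub_cancel] at h2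
    exact (intervalIntegrable_iff_integrableOn_Ioo_of_le hat.le).mp h2
  have hint : ∀ n : ℕ, MeasureTheory.IntegrableOn
      (fun s => ((t - s : ℝ) : ℂ) ^ (α * n + β - 1) * f s) (Set.Ioo a t) := by
    intro n
    have := MeasureTheory.Integrable.bdd_mul (hker n) hfm hfbd
    exact this.congr (Filter.Eventually.of_forall fun s => mul_comm _ _)
  have hFint : ∀ n : ℕ, MeasureTheory.Integrable (F n)
      (MeasureTheory.volume.restrict (Set.Ioo a t)) := fun n =>
    ((hint n).const_mul (coef n))
  have hkerval : ∀ n : ℕ, (∫ s in Set.Ioo a t, (t - s) ^ (α.re * n + β.re - 1)) =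
      (t - a) ^ (α.re * n + β.re) / (α.re * n + β.re) := by
    intro n
    set c : ℝ := α.re * n + β.re with hc
    have hcpos : 0 < c := hrepos n
    rw [← MeasureTheory.integral_Ioc_eq_integral_Ioo,
      ← intervalIntegral.integral_of_le hat.le,
      intervalIntegral.integral_comp_sub_left (fun u => u ^ (c - 1)) t]
    simp only [sub_self, sub_sub_cancel]
    rw [integral_rpow (Or.inl (by linarith))]
    rw [Real.zero_rpow (by linarith : c - 1 + 1 ≠ 0)]
    norm_num
  have hkerint : ∀ n : ℕ, MeasureTheory.IntegrableOn
      (fun s => (t - s) ^ (α.re * n + β.re - 1)) (Set.Ioo a t) := by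
    intro n
    have h1 : IntervalIntegrable (fun x : ℝ => x ^ (α.re * n + β.re - 1))
        MeasureTheory.volume 0 (t - a) :=
      intervalIntegral.intervalIntegrable_rpow' (by nlinarith [hrepos n])
    have h2 := (h1.comp_sub_left t).symm
    simp only [sub_zero, sub_sub_cancel] at h2
    exact (intervalIntegrable_iff_integrableOn_Ioo_of_le hat.le).mp h2
  have hnormbd : ∀ n : ℕ, (∫ s in Set.Ioo a t, ‖F n s‖) ≤
      ‖coef n‖ * (M * ((t - a) ^ (α.re * n + β.re) / (α.re * n + β.re))) := by
    intro n
    have heq : (∫ s in Set.Ioo a t, ‖F n s‖) =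
        ‖coef n‖ * ∫ s in Set.Ioo a t, ‖((t - s : ℝ) : ℂ) ^ (α * n + β - 1) * f s‖ := by
      rw [← MeasureTheory.integral_const_mul]
      refine MeasureTheory.setIntegral_congr_fun measurableSet_Ioo (fun s hs => ?_)
      rw [hF]; simp [norm_mul]
    rw [heq]
    refine mul_le_mul_of_nonneg_left ?_ (norm_nonneg (coef n))
    calc (∫ s in Set.Ioo a t, ‖((t - s : ℝ) : ℂ) ^ (α * n + β - 1) * f s‖)
        ≤ ∫ s in Set.Ioo a t, M * (t - s) ^ (α.re * n + β.re - 1) := by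
          refine MeasureTheory.setIntegral_mono_on ((hint n).norm)
            ((hkerint n).const_mul M) measurableSet_Ioo (fun s hs => ?_)
          have hts : 0 < t - s := by linarith [hs.2]
          rw [norm_mul,
            Complex.norm_cpow_eq_rpow_re_of_pos hts, hre n]
          calc (t - s) ^ (α.re * n + β.re - 1) * ‖f s‖ ≤
              (t - s) ^ (α.re * n + β.re - 1) * M :=
                mul_le_mul_of_nonneg_left (hMb s (hsub hs)) (Real.rpow_nonneg hts.le _)
            _ = M * (t - s) ^ (α.re * n + β.re - 1) := mul_comm _ _
      _ = M * ((t - a) ^ (α.re * n + β.re) / (α.re * n + β.re)) := by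
          rw [MeasureTheory.integral_const_mul, hkerval n]
  -- summability of the norm integrals
  set R : ℝ := ‖ω‖ * (t - a) ^ α.re with hR
  have hRnn : 0 ≤ R := by positivity
  have hsummaster := (PrabAux.master_summable α β θ hα hβ hRnn).mul_left
    (M * (t - a) ^ β.re / β.re)
  have hsumnorm : Summable (fun n : ℕ => ∫ s in Set.Ioo a t, ‖F n s‖) := by
    refine Summable.of_nonneg_of_le
      (fun n => MeasureTheory.integral_nonneg (fun s => norm_nonneg _))
      (fun n => ?_) hsummaster
    refine (hnormbd n).trans ?_
    have hcoefnorm : ‖coef n‖ = ‖cpoch θ n‖ * ‖(Complex.Gamma (α * n + β))⁻¹‖ * ‖ω‖ ^ n /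
        (n.factorial : ℝ) := by
      rw [hcoef]
      simp [norm_mul, norm_div, norm_pow]
    have hsplit : (t - a) ^ (α.re * n + β.re) = (t - a) ^ (α.re * (n:ℝ)) * (t - a) ^ β.re :=
      Real.rpow_add hta _ _
    have hsplit2 : (t - a) ^ (α.re * (n:ℝ)) = ((t - a) ^ α.re) ^ n := by
      rw [← Real.rpow_natCast ((t - a) ^ α.re) n, ← Real.rpow_mul hta.le]
    have h1 : (α.re * n + β.re)⁻¹ ≤ β.re⁻¹ := by
      apply inv_anti₀ hβ
      nlinarith [hrepos n]
    calc ‖coef n‖ * (M * ((t - a) ^ (α.re * n + β.re) / (α.re * n + β.re)))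
        = (‖cpoch θ n‖ * ‖(Complex.Gamma (α * n + β))⁻¹‖ * R ^ n / (n.factorial : ℝ)) *
            (M * (t - a) ^ β.re) * (α.re * n + β.re)⁻¹ := by
          rw [hcoefnorm, hsplit, hsplit2, hR, mul_pow]
          ring
      _ ≤ (‖cpoch θ n‖ * ‖(Complex.Gamma (α * n + β))⁻¹‖ * R ^ n / (n.factorial : ℝ)) *
            (M * (t - a) ^ β.re) * β.re⁻¹ := by
          refine mul_le_mul_of_nonneg_left h1 ?_
          have h2 : (0:ℝ) ≤ ‖cpoch θ n‖ * ‖(Complex.Gamma (α * n + β))⁻¹‖ * R ^ n /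
              (n.factorial : ℝ) := by positivity
          positivity
      _ = M * (t - a) ^ β.re / β.re *
            (‖cpoch θ n‖ * ‖(Complex.Gamma (α * n + β))⁻¹‖ * R ^ n / (n.factorial : ℝ)) := by
          ring
  have hkey := MeasureTheory.hasSum_integral_of_summable_integral_norm hFint hsumnorm
  have hfun : ∀ n : ℕ, (∫ s in Set.Ioo a t, F n s) =
      cpoch θ n * ω ^ n / (n.factorial : ℂ) * rlI (α * n + β) a f t := by
    intro n
    rw [hF]
    simp only
    rw [MeasureTheory.integral_const_mul, rlI, intervalIntegral.integral_of_le hat.le,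
      MeasureTheory.integral_Ioc_eq_integral_Ioo, hcoef]
    ring
  have hprab : (∫ s in Set.Ioo a t, ∑' n, F n s) = prabI α β θ ω a f t := by
    rw [prabI, intervalIntegral.integral_of_le hat.le,
      MeasureTheory.integral_Ioc_eq_integral_Ioo]
    refine MeasureTheory.setIntegral_congr_fun measurableSet_Ioo (fun s hs => ?_)
    have hts : 0 < t - s := by linarith [hs.2]
    have hXne : ((t - s : ℝ) : ℂ) ≠ 0 := Complex.ofReal_ne_zero.mpr hts.ne'
    have hpow : ∀ n : ℕ, ((t - s : ℝ):ℂ) ^ (α * n + β - 1) =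
        ((t - s : ℝ):ℂ) ^ (β - 1) * (((t - s : ℝ):ℂ) ^ α) ^ n := by
      intro n
      rw [← Complex.cpow_nat_mul, ← Complex.cpow_add _ _ hXne]
      congr 1; ring
    have hterm : ∀ n : ℕ, F n s = (((t - s : ℝ):ℂ) ^ (β - 1) * f s) *
        (cpoch θ n * (Complex.Gamma (α * n + β))⁻¹ *
          (ω * ((t - s : ℝ):ℂ) ^ α) ^ n / (n.factorial : ℂ)) := by
      intro n
      rw [hF]
      simp only
      rw [hcoef, hpow n, mul_pow]
      ring
    rw [tsum_congr hterm, tsum_mul_left]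
    simp only [mlThree]
    ring
  rw [← hprab]
  have hfe : (fun n : ℕ => cpoch θ n * ω ^ n / (n.factorial : ℂ) * rlI (α * n + β) a f t)
      = fun n => ∫ s in Set.Ioo a t, F n s := funext fun n => (hfun n).symm
  rw [hfe]
  exact hkey

end
end

section
/- (Lemma 2.1, part 1.) Let α, β, θ, ω ∈ ℂ with Re α > 0 and Re β > 0, let a < b be reals, and let f : [a,b] → ℂ be continuous. Then the function t ↦ (𝕀^θ_{α,β,ω;a}f)(t) is continuous on [a,b] (with value 0 at t = a). -/
open MeasureTheory Set Filter Topology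

noncomputable section

/-- The real "partial beta" integral over `(0,1)`. -/
def pBeta (c x : ℝ) : ℝ := ∫ t in Ioo (0:ℝ) 1, t ^ (x - 1) * (1 - t) ^ (c - 1)

lemma oneSub_rpow_integrableOn (c : ℝ) (hc : 0 < c) :
    IntegrableOn (fun t : ℝ => (1 - t) ^ (c - 1)) (Ioo (0:ℝ) 1) := by
  have h1 : IntervalIntegrable (fun t : ℝ => t ^ (c - 1)) volume 0 1 :=
    intervalIntegral.intervalIntegrable_rpow' (by linarith)
  have h2 := h1.comp_sub_left 1
  simp only [sub_zero, sub_self] at h2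
  have h3 : IntegrableOn (fun t : ℝ => (1 - t) ^ (c - 1)) (Ioc (0:ℝ) 1) :=
    (intervalIntegrable_iff_integrableOn_Ioc_of_le (by norm_num)).1 h2.symm
  exact h3.mono_set Ioo_subset_Ioc_self

lemma pBeta_tendsto (c : ℝ) (hc : 0 < c) :
    Tendsto (pBeta c) atTop (𝓝 0) := by
  have h0 : (0:ℝ) = ∫ _t in Ioo (0:ℝ) 1, (0:ℝ) := by simp
  rw [h0]
  apply tendsto_integral_filter_of_dominated_convergence
      (bound := fun t : ℝ => (1 - t) ^ (c - 1))
  · filter_upwards with x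
    apply ContinuousOn.aestronglyMeasurable _ measurableSet_Ioo
    apply ContinuousOn.mul
    · exact continuousOn_id.rpow_const (fun t ht => Or.inl ht.1.ne')
    · exact (continuousOn_const.sub continuousOn_id).rpow_const
        (fun t ht => Or.inl (by simp only [Pi.sub_apply, id_eq, ne_eq, sub_eq_zero]; exact fun h => (h ▸ ht.2).false))
  · filter_upwards [eventually_ge_atTop (1:ℝ)] with x hx
    filter_upwards [ae_restrict_mem measurableSet_Ioo] with t ht
    have h1 : (0:ℝ) ≤ (1 - t) ^ (c - 1) := Real.rpow_nonneg (by linarith [ht.2]) _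
    have h2 : t ^ (x - 1) ≤ 1 := Real.rpow_le_one ht.1.le ht.2.le (by linarith)
    have h3 : (0:ℝ) ≤ t ^ (x - 1) := Real.rpow_nonneg ht.1.le _
    rw [Real.norm_of_nonneg (mul_nonneg h3 h1)]
    exact mul_le_of_le_one_left h1 h2
  · exact oneSub_rpow_integrableOn c hc
  · filter_upwards [ae_restrict_mem measurableSet_Ioo] with t ht
    have h1 : Tendsto (fun x : ℝ => t ^ (x - 1)) atTop (𝓝 0) := by
      have := tendsto_rpow_atTop_of_base_lt_one t (by linarith [ht.1]) ht.2
      exact this.comp (tendsto_atTop_add_const_right atTop (-1) tendsto_id)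
    simpa using h1.mul_const ((1 - t) ^ (c - 1))

lemma pBeta_nonneg (c x : ℝ) : 0 ≤ pBeta c x := by
  apply setIntegral_nonneg measurableSet_Ioo
  intro t ht
  exact mul_nonneg (Real.rpow_nonneg ht.1.le _) (Real.rpow_nonneg (by linarith [ht.2]) _)

/-- Norm bound for the complex beta integral. -/
lemma norm_betaIntegral_le (z w : ℂ) (hz : 0 < z.re) (hw : 0 < w.re) :
    ‖Complex.betaIntegral z w‖ ≤ pBeta w.re z.re := by
  rw [Complex.betaIntegral]
  have h1 : ‖∫ t : ℝ in (0:ℝ)..1, (t:ℂ) ^ (z - 1) * (1 - (t:ℂ)) ^ (w - 1)‖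
      ≤ ∫ t : ℝ in (0:ℝ)..1, ‖(t:ℂ) ^ (z - 1) * (1 - (t:ℂ)) ^ (w - 1)‖ :=
    intervalIntegral.norm_integral_le_integral_norm (by norm_num)
  refine h1.trans ?_
  rw [intervalIntegral.integral_of_le (by norm_num : (0:ℝ) ≤ 1),
    MeasureTheory.integral_Ioc_eq_integral_Ioo]
  rw [pBeta]
  apply le_of_eq
  apply setIntegral_congr_fun measurableSet_Ioo
  intro t ht
  have ht1 : ((1:ℂ) - (t:ℂ)) = ((1 - t : ℝ) : ℂ) := by push_cast; ring
  simp only [norm_mul, ht1,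
    Complex.norm_cpow_eq_rpow_re_of_pos ht.1, Complex.norm_cpow_eq_rpow_re_of_pos (by linarith [ht.2] : (0:ℝ) < 1 - t),
    Complex.sub_re, Complex.one_re]

lemma norm_Gamma_inv_add_le {z w : ℂ} (hz : 0 < z.re) (hw : 0 < w.re) :
    ‖(Complex.Gamma (z + w))⁻¹‖ ≤ pBeta w.re z.re / ‖Complex.Gamma w‖ * ‖(Complex.Gamma z)⁻¹‖ := by
  have h0 : Complex.Gamma z * Complex.Gamma w
      = Complex.Gamma (z + w) * Complex.betaIntegral z w :=
    Complex.Gamma_mul_Gamma_eq_betaIntegral hz hw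
  have hz0 : Complex.Gamma z ≠ 0 := Complex.Gamma_ne_zero_of_re_pos hz
  have hw0 : Complex.Gamma w ≠ 0 := Complex.Gamma_ne_zero_of_re_pos hw
  have hzw0 : Complex.Gamma (z + w) ≠ 0 :=
    Complex.Gamma_ne_zero_of_re_pos (by rw [Complex.add_re]; positivity)
  have h1 : (Complex.Gamma (z + w))⁻¹
      = Complex.betaIntegral z w * (Complex.Gamma w)⁻¹ * (Complex.Gamma z)⁻¹ := by
    field_simp
    linear_combination h0
  rw [h1, norm_mul, norm_mul, norm_inv]
  have h2 : ‖Complex.betaIntegral z w‖ ≤ pBeta w.re z.re := norm_betaIntegral_le z w hz hw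
  have h3 : 0 < ‖Complex.Gamma w‖ := norm_pos_iff.2 hw0
  rw [div_eq_mul_inv]
  gcongr

lemma summable_ml_bound (α β θ : ℂ) (hα : 0 < α.re) (R : ℝ) (hR : 0 ≤ R) :
    Summable (fun n : ℕ =>
      ‖cpoch θ n‖ * ‖(Complex.Gamma (α * n + β))⁻¹‖ * R ^ n / (n.factorial : ℝ)) := by
  set M : ℕ → ℝ := fun n =>
    ‖cpoch θ n‖ * ‖(Complex.Gamma (α * n + β))⁻¹‖ * R ^ n / (n.factorial : ℝ) with hM
  have hMnn : ∀ n, 0 ≤ M n := by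
    intro n; rw [hM]; positivity
  have hΓα : (0:ℝ) < ‖Complex.Gamma α‖ :=
    norm_pos_iff.2 (Complex.Gamma_ne_zero_of_re_pos hα)
  set D : ℝ := (‖θ‖ + 1) * R / ‖Complex.Gamma α‖ with hD
  have hDnn : 0 ≤ D := by rw [hD]; positivity
  -- x n → ∞
  have hx : Tendsto (fun n : ℕ => (α * n + β).re) atTop atTop := by
    have : (fun n : ℕ => (α * n + β).re) = fun n : ℕ => α.re * n + β.re := by
      funext n
      simp [Complex.add_re, Complex.mul_re]
    rw [this]
    exact tendsto_atTop_add_const_right _ _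
      (Tendsto.const_mul_atTop hα tendsto_natCast_atTop_atTop)
  have hP : Tendsto (fun n : ℕ => D * pBeta α.re ((α * n + β).re)) atTop (𝓝 0) := by
    simpa using ((pBeta_tendsto α.re hα).comp hx).const_mul D
  have hev : ∀ᶠ n : ℕ in atTop,
      D * pBeta α.re ((α * n + β).re) ≤ 1/2 ∧ 0 < (α * n + β).re := by
    filter_upwards [hP.eventually_le_const (by norm_num : (0:ℝ) < 1/2),
      hx.eventually_gt_atTop 0] with n h1 h2
    exact ⟨h1, h2⟩
  apply summable_of_ratio_norm_eventually_le (r := 1/2) (by norm_num)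
  filter_upwards [hev] with n hn
  obtain ⟨h12, hxn⟩ := hn
  set z : ℂ := α * n + β with hz
  have e1 : (α * ((n:ℕ)+1 : ℕ) + β) = z + α := by push_cast; ring
  have hpoch : cpoch θ (n+1) = cpoch θ n * (θ + n) := by unfold cpoch; exact Finset.prod_range_succ _ _
  have hΓ : ‖(Complex.Gamma (z + α))⁻¹‖
      ≤ pBeta α.re z.re / ‖Complex.Gamma α‖ * ‖(Complex.Gamma z)⁻¹‖ :=
    norm_Gamma_inv_add_le hxn hα
  have hθn : ‖θ + (n:ℂ)‖ ≤ (‖θ‖ + 1) * ((n:ℝ) + 1) := by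
    calc ‖θ + (n:ℂ)‖ ≤ ‖θ‖ + ‖(n:ℂ)‖ := norm_add_le _ _
    _ = ‖θ‖ + (n:ℝ) := by rw [Complex.norm_natCast]
    _ ≤ (‖θ‖ + 1) * ((n:ℝ) + 1) := by nlinarith [norm_nonneg θ, Nat.cast_nonneg (α := ℝ) n]
  have hMn1 : M (n+1) = ‖cpoch θ n‖ * ‖θ + (n:ℂ)‖ * ‖(Complex.Gamma (z + α))⁻¹‖
      * (R ^ n * R) / (((n:ℝ) + 1) * (n.factorial : ℝ)) := by
    rw [hM]
    simp only [e1, hpoch, norm_mul, Nat.factorial_succ, pow_succ]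
    push_cast
    ring
  have key : M (n+1) ≤ D * pBeta α.re z.re * M n := by
    rw [hMn1, hM, hD]
    have hfac : (0:ℝ) < (n.factorial : ℝ) := by positivity
    have hn1 : (0:ℝ) < (n:ℝ) + 1 := by positivity
    have hPnn : 0 ≤ pBeta α.re z.re := pBeta_nonneg _ _
    calc ‖cpoch θ n‖ * ‖θ + (n:ℂ)‖ * ‖(Complex.Gamma (z + α))⁻¹‖ * (R ^ n * R)
          / (((n:ℝ) + 1) * (n.factorial : ℝ))
        ≤ ‖cpoch θ n‖ * ((‖θ‖ + 1) * ((n:ℝ) + 1))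
          * (pBeta α.re z.re / ‖Complex.Gamma α‖ * ‖(Complex.Gamma z)⁻¹‖) * (R ^ n * R)
          / (((n:ℝ) + 1) * (n.factorial : ℝ)) := by
          gcongr <;> first | exact norm_nonneg _ | positivity
      _ = (‖θ‖ + 1) * R / ‖Complex.Gamma α‖ * pBeta α.re z.re
          * (‖cpoch θ n‖ * ‖(Complex.Gamma z)⁻¹‖ * R ^ n / (n.factorial : ℝ)) := by
          have key : ∀ cp gz P G F R1 Rn nn : ℝ, nn ≠ 0 → G ≠ 0 → F ≠ 0 →
              cp * ((‖θ‖ + 1) * nn) * (P / G * gz) * (Rn * R1) / (nn * F)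
              = (‖θ‖ + 1) * R1 / G * P * (cp * gz * Rn / F) := by
            intros cp gz P G F R1 Rn nn h1 h2 h3
            field_simp
          exact key _ _ _ _ _ _ _ _ hn1.ne' hΓα.ne' hfac.ne'
  have h2 : D * pBeta α.re z.re * M n ≤ (1/2) * M n := by
    apply mul_le_mul_of_nonneg_right h12 (hMnn n)
  calc ‖M (n+1)‖ = M (n+1) := Real.norm_of_nonneg (hMnn _)
    _ ≤ (1/2) * M n := key.trans h2
    _ = (1/2) * ‖M n‖ := by rw [Real.norm_of_nonneg (hMnn n)]

lemma mlThree_boundedContinuous (α β θ : ℂ) (hα : 0 < α.re) (R : ℝ) (hR : 0 ≤ R) :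
    ∃ C : ℝ, 0 ≤ C ∧ (∀ z : ℂ, ‖z‖ ≤ R → ‖mlThree α β θ z‖ ≤ C) ∧
      ContinuousOn (mlThree α β θ) (Metric.closedBall 0 R) := by
  set M : ℕ → ℝ := fun n =>
    ‖cpoch θ n‖ * ‖(Complex.Gamma (α * n + β))⁻¹‖ * R ^ n / (n.factorial : ℝ) with hM
  have hMsum : Summable M := summable_ml_bound α β θ hα R hR
  have hMnn : ∀ n, 0 ≤ M n := fun n => by rw [hM]; positivity
  have hbd : ∀ (n : ℕ) (z : ℂ), ‖z‖ ≤ R →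
      ‖cpoch θ n * (Complex.Gamma (α * n + β))⁻¹ * z ^ n / (n.factorial : ℂ)‖ ≤ M n := by
    intro n z hzR
    rw [hM]
    simp only [norm_div, norm_mul, norm_pow, Complex.norm_natCast]
    gcongr <;> first | positivity | exact norm_nonneg z
  refine ⟨∑' n, M n, tsum_nonneg hMnn, ?_, ?_⟩
  · intro z hzR
    have hs : Summable (fun n : ℕ =>
        cpoch θ n * (Complex.Gamma (α * n + β))⁻¹ * z ^ n / (n.factorial : ℂ)) :=
      Summable.of_norm_bounded hMsum (fun n => hbd n z hzR)
    calc ‖mlThree α β θ z‖ ≤ ∑' n, ‖cpoch θ n * (Complex.Gamma (α * n + β))⁻¹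
          * z ^ n / (n.factorial : ℂ)‖ := norm_tsum_le_tsum_norm (hs.norm)
      _ ≤ ∑' n, M n := hs.norm.tsum_le_tsum (fun n => hbd n z hzR) hMsum
  · show ContinuousOn (fun z => ∑' n : ℕ,
      cpoch θ n * (Complex.Gamma (α * n + β))⁻¹ * z ^ n / (n.factorial : ℂ)) _
    refine continuousOn_tsum
      (fun n => ((continuous_const.mul (continuous_pow n)).div_const _).continuousOn) hMsum
      (fun n z hz => hbd n z (by simpa [Metric.mem_closedBall, Complex.dist_eq] using hz))


/-- Lemma 2.1, part 1: for continuous `f` on `[a,b]`, the Prabhakar integral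
`t ↦ (𝕀^θ_{α,β,ω;a} f)(t)` is continuous on `[a,b]`, with value `0` at `t = a`. -/
theorem prabI_continuousOn (α β θ ω : ℂ) (hα : 0 < α.re) (hβ : 0 < β.re)
    (a b : ℝ) (hab : a < b) (f : ℝ → ℂ) (hf : ContinuousOn f (Set.Icc a b)) :
    ContinuousOn (prabI α β θ ω a f) (Set.Icc a b) ∧ prabI α β θ ω a f a = 0 := by
  have hzero : prabI α β θ ω a f a = 0 := by
    simp [prabI]
  refine ⟨?_, hzero⟩
  have hL : 0 < b - a := sub_pos.2 hab
  set R : ℝ := ‖ω‖ * max 1 ((b - a) ^ α.re) with hR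
  have hR0 : 0 ≤ R := by positivity
  obtain ⟨CE, hCE0, hCEbd, hCEcont⟩ := mlThree_boundedContinuous α β θ hα R hR0
  obtain ⟨Cf, hCf⟩ := (isCompact_Icc).exists_bound_of_continuousOn hf
  have hCf0 : 0 ≤ Cf := le_trans (norm_nonneg _) (hCf a ⟨le_refl a, hab.le⟩)
  set K : ℝ → ℂ := fun u => ((u : ℝ) : ℂ) ^ (β - 1) * mlThree α β θ (ω * ((u : ℝ) : ℂ) ^ α)
    with hK
  -- the composed argument stays in the ball of radius R
  have hωu : ∀ u : ℝ, u ∈ Ioc 0 (b - a) → ‖ω * ((u : ℝ) : ℂ) ^ α‖ ≤ R := by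
    intro u hu
    rw [norm_mul, hR]
    gcongr
    rw [Complex.norm_cpow_eq_rpow_re_of_pos hu.1]
    rcases le_or_gt u 1 with h | h
    · exact le_max_of_le_left (Real.rpow_le_one hu.1.le h hα.le)
    · exact le_max_of_le_right (Real.rpow_le_rpow (zero_le_one.trans h.le) hu.2 hα.le)
  have hKbd : ∀ u ∈ Ioc (0:ℝ) (b - a), ‖K u‖ ≤ u ^ (β.re - 1) * CE := by
    intro u hu
    rw [hK]
    simp only [norm_mul]
    have h1 : ‖((u : ℝ) : ℂ) ^ (β - 1)‖ = u ^ (β.re - 1) := by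
      rw [Complex.norm_cpow_eq_rpow_re_of_pos hu.1, Complex.sub_re,
        Complex.one_re]
    rw [h1]
    gcongr
    · exact Real.rpow_nonneg hu.1.le _
    · exact hCEbd _ (hωu u hu)
  -- continuity of K on (0, b-a]
  have hinner : ContinuousOn (fun u : ℝ => ω * ((u : ℝ) : ℂ) ^ α) (Ioc 0 (b - a)) := by
    intro u hu
    exact (continuousAt_const.mul ((continuousAt_cpow_const
      (Or.inl (by simpa using hu.1))).comp
      Complex.continuous_ofReal.continuousAt)).continuousWithinAt
  have hml : ContinuousOn (fun u : ℝ => mlThree α β θ (ω * ((u : ℝ) : ℂ) ^ α))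
      (Ioc 0 (b - a)) :=
    hCEcont.comp hinner (fun u hu => by
      simpa [Metric.mem_closedBall, dist_zero_right] using hωu u hu)
  have hcpow : ContinuousOn (fun u : ℝ => ((u : ℝ) : ℂ) ^ (β - 1)) (Ioc 0 (b - a)) := by
    intro u hu
    exact ((continuousAt_cpow_const (Or.inl (by simpa using hu.1))).comp
      Complex.continuous_ofReal.continuousAt).continuousWithinAt
  have hKcont : ContinuousOn K (Ioc 0 (b - a)) := hcpow.mul hml
  -- rewrite prabI as a fixed-domain integral
  set G : ℝ → ℂ := fun t =>
    ∫ u in Ioc 0 (b - a), (Ioc 0 (t - a)).indicator (fun u => K u * f (t - u)) u with hG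
  have hEq : ∀ t ∈ Icc a b, prabI α β θ ω a f t = G t := by
    intro t ht
    have h1 : prabI α β θ ω a f t = ∫ s in a..t, (fun u => K u * f (t - u)) (t - s) := by
      rw [prabI]
      congr 1
      funext s
      rw [hK]
      simp only [sub_sub_cancel]
    rw [h1, intervalIntegral.integral_comp_sub_left (fun u => K u * f (t - u)) t, sub_self,
      intervalIntegral.integral_of_le (by linarith [ht.1] : (0:ℝ) ≤ t - a)]
    show _ = ∫ u in Ioc 0 (b - a), (Ioc 0 (t - a)).indicator (fun u => K u * f (t - u)) u
    rw [MeasureTheory.setIntegral_indicator measurableSet_Ioc,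
      Set.inter_eq_self_of_subset_right (Ioc_subset_Ioc_right (by linarith [ht.2]))]
  -- integrable bound
  have hbound_int : IntegrableOn (fun u : ℝ => u ^ (β.re - 1) * CE * Cf) (Ioc 0 (b - a)) := by
    apply Integrable.mul_const
    apply Integrable.mul_const
    exact (intervalIntegrable_iff_integrableOn_Ioc_of_le hL.le).1
      (intervalIntegral.intervalIntegrable_rpow' (by linarith : (-1:ℝ) < β.re - 1))
  -- continuity of G
  have hGcont : ContinuousOn G (Icc a b) := by
    intro t₀ ht₀
    have key := tendsto_integral_filter_of_dominated_convergence
      (μ := volume.restrict (Ioc 0 (b - a))) (l := 𝓝[Icc a b] t₀)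
      (F := fun t u => (Ioc 0 (t - a)).indicator (fun u => K u * f (t - u)) u)
      (f := fun u => (Ioc 0 (t₀ - a)).indicator (fun u => K u * f (t₀ - u)) u)
      (fun u => u ^ (β.re - 1) * CE * Cf)
      ?_ ?_ hbound_int ?_
    · exact key
    · -- measurability
      apply eventually_nhdsWithin_of_forall
      intro t ht
      have hcont_t : ContinuousOn (fun u => K u * f (t - u)) (Ioc 0 (t - a)) := by
        apply (hKcont.mono (Ioc_subset_Ioc_right (by linarith [ht.2]))).mul
        apply hf.comp (continuous_sub_left t).continuousOn
        intro u hu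
        show t - u ∈ Icc a b
        exact Set.mem_Icc.mpr ⟨by linarith [hu.2], by linarith [hu.1, ht.2]⟩
      exact ((aestronglyMeasurable_indicator_iff measurableSet_Ioc).2
        (hcont_t.aestronglyMeasurable measurableSet_Ioc)).restrict
    · -- domination
      apply eventually_nhdsWithin_of_forall
      intro t ht
      filter_upwards [ae_restrict_mem measurableSet_Ioc] with u hu
      by_cases hmem : u ∈ Ioc 0 (t - a)
      · rw [indicator_of_mem hmem, norm_mul]
        have h1 : ‖K u‖ ≤ u ^ (β.re - 1) * CE := hKbd u hu
        have h2 : ‖f (t - u)‖ ≤ Cf :=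
          hCf _ (Set.mem_Icc.mpr ⟨by linarith [hmem.2], by linarith [hmem.1, ht.2]⟩)
        calc ‖K u‖ * ‖f (t - u)‖ ≤ (u ^ (β.re - 1) * CE) * Cf :=
              mul_le_mul h1 h2 (norm_nonneg _) (mul_nonneg (Real.rpow_nonneg hu.1.le _) hCE0)
          _ = u ^ (β.re - 1) * CE * Cf := by ring
      · rw [indicator_of_notMem hmem, norm_zero]
        exact mul_nonneg (mul_nonneg (Real.rpow_nonneg hu.1.le _) hCE0) hCf0
    · -- pointwise convergence
      have hne : ∀ᵐ u ∂(volume.restrict (Ioc 0 (b - a))), u ≠ t₀ - a := by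
        apply ae_restrict_of_ae
        rw [ae_iff]
        simp only [not_ne_iff, Set.setOf_eq_eq_singleton]
        exact measure_singleton _
      filter_upwards [ae_restrict_mem measurableSet_Ioc, hne] with u hu hune
      rcases lt_or_gt_of_ne hune with hlt | hgt
      · -- u < t₀ - a : eventually indicator is "on"
        have hop : ∀ᶠ t in 𝓝[Icc a b] t₀, u < t - a := by
          apply eventually_nhdsWithin_of_eventually_nhds
          have hopen : IsOpen {t : ℝ | u < t - a} :=
            isOpen_lt continuous_const (continuous_id.sub continuous_const)
          exact hopen.eventually_mem (show t₀ ∈ {t : ℝ | u < t - a} from hlt)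
        have hval : ∀ᶠ t in 𝓝[Icc a b] t₀,
            K u * f (t - u) = (Ioc 0 (t - a)).indicator (fun u => K u * f (t - u)) u := by
          filter_upwards [hop] with t htu
          exact (Set.indicator_of_mem (show u ∈ Ioc (0:ℝ) (t - a) from Set.mem_Ioc.mpr ⟨hu.1, htu.le⟩) (fun u => K u * f (t - u))).symm
        have hval₀ : (Ioc 0 (t₀ - a)).indicator (fun u => K u * f (t₀ - u)) u
            = K u * f (t₀ - u) := Set.indicator_of_mem (show u ∈ Ioc (0:ℝ) (t₀ - a) from Set.mem_Ioc.mpr ⟨hu.1, hlt.le⟩) (fun u => K u * f (t₀ - u))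
        rw [hval₀]
        have hsub : Tendsto (fun t : ℝ => t - u) (𝓝[Icc a b] t₀) (𝓝[Icc a b] (t₀ - u)) := by
          refine tendsto_nhdsWithin_of_tendsto_nhds_of_eventually_within _ ?_ ?_
          · exact ((continuous_sub_right u).tendsto t₀).mono_left nhdsWithin_le_nhds
          · filter_upwards [hop, eventually_mem_nhdsWithin] with t h1 h2
            have h2' := Set.mem_Icc.mp h2
            exact Set.mem_Icc.mpr ⟨by linarith, by linarith [h2'.2, hu.1]⟩
        have hmem₀ : t₀ - u ∈ Icc a b := by
          have ht₀' := Set.mem_Icc.mp ht₀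
          exact Set.mem_Icc.mpr ⟨by linarith, by linarith [ht₀'.2, hu.1]⟩
        have hft : Tendsto (fun t : ℝ => f (t - u)) (𝓝[Icc a b] t₀) (𝓝 (f (t₀ - u))) :=
          Filter.Tendsto.comp (hf (t₀ - u) hmem₀) hsub
        exact (tendsto_const_nhds.mul hft).congr' hval
      · -- u > t₀ - a : eventually indicator is "off"
        have hop : ∀ᶠ t in 𝓝[Icc a b] t₀, t - a < u := by
          apply eventually_nhdsWithin_of_eventually_nhds
          have hopen : IsOpen {t : ℝ | t - a < u} :=
            isOpen_lt (continuous_id.sub continuous_const) continuous_const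
          exact hopen.eventually_mem (show t₀ ∈ {t : ℝ | t - a < u} from hgt)
        have hval : ∀ᶠ t in 𝓝[Icc a b] t₀,
            (0:ℂ) = (Ioc 0 (t - a)).indicator (fun u => K u * f (t - u)) u := by
          filter_upwards [hop] with t htu
          exact (indicator_of_notMem (fun hm => absurd hm.2 (not_le.2 htu)) _).symm
        have hval₀ : (Ioc 0 (t₀ - a)).indicator (fun u => K u * f (t₀ - u)) u = 0 :=
          indicator_of_notMem (fun hm => absurd hm.2 (not_le.2 hgt)) _
        rw [hval₀]
        exact tendsto_const_nhds.congr' hval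
  exact hGcont.congr hEq



end
end

section
/- (Core of Theorem 3.4: the integral equation with respect to a function.) Let m ≥ 1, let α, ω, β₀, …, β_m, θ₀, …, θ_m ∈ ℂ with Re α > 0 and Re β₀ > Re β₁ > ⋯ > Re β_m ≥ 0, let T > 0, let ψ : [0,T] → ℝ be continuously differentiable with ψ(0) = 0 and ψ'(s) > 0 for all s ∈ [0,T], and let σ₁, …, σ_m, g : [0,T] → ℂ be continuous. Then there exists a unique continuous function u : [0,T] → ℂ satisfying u(t) + ∑_{i=1}^m σ_i(t)·(𝕀^{θ₀−θ_i;ψ}_{α,β₀−β_i,ω;0}u)(t) = g(t) for all t ∈ [0,T]. Moreover, u is given by the uniformly convergent series u = ∑_{k=0}^∞ (−1)^k A_ψ^k g, where A_ψ is the operator (A_ψ w)(t) = ∑_{i=1}^m σ_i(t)·(𝕀^{θ₀−θ_i;ψ}_{α,β₀−β_i,ω;0}w)(t). -/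
open MeasureTheory Set Filter Topology

noncomputable section

/-- Prabhakar fractional integral with respect to a strictly increasing `C¹` function `ψ`:
`(𝕀^{θ;ψ}_{α,β,ω;a} f)(t) = ∫_a^t (ψ(t)−ψ(s))^{β−1} E^θ_{α,β}(ω(ψ(t)−ψ(s))^α) f(s) ψ'(s) ds`. -/
def prabIPsi (α β θ ω : ℂ) (a : ℝ) (ψ : ℝ → ℝ) (f : ℝ → ℂ) (t : ℝ) : ℂ :=
  ∫ s in a..t, ((ψ t - ψ s : ℝ) : ℂ) ^ (β - 1) *
    mlThree α β θ (ω * ((ψ t - ψ s : ℝ) : ℂ) ^ α) * f s * ((deriv ψ s : ℝ) : ℂ)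

/-- The operator `(A_ψ w)(t) = ∑_{i=1}^m σᵢ(t)·(𝕀^{θ₀−θᵢ;ψ}_{α,β₀−βᵢ,ω;0} w)(t)`. -/
def opAPsi (α ω : ℂ) (β θ : ℕ → ℂ) (m : ℕ) (σ : ℕ → ℝ → ℂ) (ψ : ℝ → ℝ) (w : ℝ → ℂ) :
    ℝ → ℂ :=
  fun t => ∑ i ∈ Finset.Icc 1 m, σ i t * prabIPsi α (β 0 - β i) (θ 0 - θ i) ω 0 ψ w t




namespace IEq

/-- real Beta integral -/
def rbeta (x y : ℝ) : ℝ := ∫ t in (0:ℝ)..1, t ^ (x - 1) * (1 - t) ^ (y - 1)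

lemma rbeta_intable {x y : ℝ} (hx : 0 < x) (hy : 0 < y) :
    IntervalIntegrable (fun t : ℝ => t ^ (x - 1) * (1 - t) ^ (y - 1)) volume 0 1 := by
  have h1 : IntervalIntegrable (fun t : ℝ => t ^ (x - 1) * (1 - t) ^ (y - 1)) volume 0 (1/2) := by
    apply (intervalIntegral.intervalIntegrable_rpow' (by linarith)).mul_continuousOn
    intro t ht
    rw [uIcc_of_le (by norm_num : (0:ℝ) ≤ 1/2)] at ht
    have : (1 : ℝ) - t ≠ 0 := by
      have := ht.2; intro h; nlinarith [ht.1]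
    exact ((Real.continuousAt_rpow_const _ _ (Or.inl this)).comp
      (by fun_prop : Continuous fun t : ℝ => 1 - t).continuousAt).continuousWithinAt
  have h2 : IntervalIntegrable (fun t : ℝ => t ^ (x - 1) * (1 - t) ^ (y - 1)) volume (1/2) 1 := by
    have hb : IntervalIntegrable (fun t : ℝ => (1 - t) ^ (y - 1)) volume (1/2) 1 := by
      have := (intervalIntegral.intervalIntegrable_rpow' (r := y - 1) (by linarith)
        (a := 0) (b := 1/2)).comp_sub_left 1
      norm_num at this
      exact this.symm
    apply hb.continuousOn_mul
    intro t ht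
    rw [uIcc_of_le (by norm_num : (1:ℝ)/2 ≤ 1)] at ht
    have : t ≠ 0 := by have := ht.1; intro h; rw [h] at this; norm_num at this
    exact (Real.continuousAt_rpow_const _ _ (Or.inl this)).continuousWithinAt
  exact h1.trans h2

lemma rbeta_nonneg {x y : ℝ} : 0 ≤ rbeta x y := by
  apply intervalIntegral.integral_nonneg (by norm_num)
  intro u hu
  exact mul_nonneg (Real.rpow_nonneg hu.1 _) (Real.rpow_nonneg (by linarith [hu.2]) _)

lemma rbeta_le {x y ε : ℝ} (hx : 0 < x) (hy : 1 ≤ y) (hε : 0 < ε) (hε1 : ε ≤ 1) :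
    rbeta x y ≤ ε ^ x / x + max (ε ^ (x - 1)) 1 * (1 - ε) ^ (y - 1) := by
  have hy0 : 0 < y := by linarith
  have hεI : IntervalIntegrable (fun t : ℝ => t ^ (x - 1) * (1 - t) ^ (y - 1)) volume 0 ε :=
    (rbeta_intable hx hy0).mono_set (by rw [uIcc_of_le hε.le, uIcc_of_le (by norm_num : (0:ℝ) ≤ 1)]; exact Icc_subset_Icc le_rfl hε1)
  have hεI2 : IntervalIntegrable (fun t : ℝ => t ^ (x - 1) * (1 - t) ^ (y - 1)) volume ε 1 :=
    (rbeta_intable hx hy0).mono_set (by rw [uIcc_of_le hε1, uIcc_of_le (by norm_num : (0:ℝ) ≤ 1)]; exact Icc_subset_Icc hε.le le_rfl)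
  have hsplit : rbeta x y = (∫ t in (0:ℝ)..ε, t ^ (x - 1) * (1 - t) ^ (y - 1))
      + ∫ t in ε..(1:ℝ), t ^ (x - 1) * (1 - t) ^ (y - 1) :=
    (intervalIntegral.integral_add_adjacent_intervals hεI hεI2).symm
  have h1 : (∫ t in (0:ℝ)..ε, t ^ (x - 1) * (1 - t) ^ (y - 1)) ≤ ε ^ x / x := by
    have hle : (∫ t in (0:ℝ)..ε, t ^ (x - 1) * (1 - t) ^ (y - 1)) ≤ ∫ t in (0:ℝ)..ε, t ^ (x - 1) := by
      apply intervalIntegral.integral_mono_on hε.le hεI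
        (intervalIntegral.intervalIntegrable_rpow' (by linarith))
      intro t ht
      have h1t : (1 : ℝ) - t ≤ 1 := by linarith [ht.1]
      have h1t0 : 0 ≤ (1 : ℝ) - t := by have := ht.2; linarith
      calc t ^ (x - 1) * (1 - t) ^ (y - 1) ≤ t ^ (x - 1) * 1 := by
            apply mul_le_mul_of_nonneg_left (Real.rpow_le_one h1t0 h1t (by linarith))
              (Real.rpow_nonneg ht.1 _)
        _ = t ^ (x - 1) := mul_one _
    have hev : (∫ t in (0:ℝ)..ε, t ^ (x - 1)) = ε ^ x / x := by
      rw [integral_rpow (Or.inl (by linarith))]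
      rw [Real.zero_rpow (by linarith : x - 1 + 1 ≠ 0)]
      ring_nf
    linarith
  have h2 : (∫ t in ε..(1:ℝ), t ^ (x - 1) * (1 - t) ^ (y - 1))
      ≤ max (ε ^ (x - 1)) 1 * (1 - ε) ^ (y - 1) := by
    have hle : (∫ t in ε..(1:ℝ), t ^ (x - 1) * (1 - t) ^ (y - 1))
        ≤ ∫ _t in ε..(1:ℝ), max (ε ^ (x - 1)) 1 * (1 - ε) ^ (y - 1) := by
      apply intervalIntegral.integral_mono_on hε1 hεI2 intervalIntegrable_const
      intro t ht
      have ht0 : 0 < t := lt_of_lt_of_le hε ht.1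
      have hb1 : t ^ (x - 1) ≤ max (ε ^ (x - 1)) 1 := by
        rcases le_total x 1 with hx1 | hx1
        · exact le_max_of_le_left (Real.rpow_le_rpow_of_nonpos hε ht.1 (by linarith))
        · exact le_max_of_le_right (Real.rpow_le_one ht0.le ht.2 (by linarith))
      have hb2 : (1 - t) ^ (y - 1) ≤ (1 - ε) ^ (y - 1) :=
        Real.rpow_le_rpow (by linarith [ht.2]) (by linarith [ht.1]) (by linarith)
      exact mul_le_mul hb1 hb2 (Real.rpow_nonneg (by linarith [ht.2]) _)
        (le_max_of_le_right zero_le_one)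
    have : (∫ _t in ε..(1:ℝ), max (ε ^ (x - 1)) 1 * (1 - ε) ^ (y - 1))
        = (1 - ε) * (max (ε ^ (x - 1)) 1 * (1 - ε) ^ (y - 1)) := by
      rw [intervalIntegral.integral_const]; simp [smul_eq_mul]
    have hnn : 0 ≤ max (ε ^ (x - 1)) 1 * (1 - ε) ^ (y - 1) := mul_nonneg (le_max_of_le_right zero_le_one) (Real.rpow_nonneg (by linarith) _)
    nlinarith [hnn, hε, hε1]
  rw [hsplit]; exact add_le_add h1 h2

lemma tendsto_rbeta (x : ℝ) (hx : 0 < x) : Tendsto (fun y => rbeta x y) atTop (𝓝 0) := by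
  rw [Metric.tendsto_atTop]
  intro η hη
  -- choose ε
  set ε : ℝ := min 1 ((x * η / 2) ^ (1 / x)) with hεdef
  have hc0 : 0 < x * η / 2 := by positivity
  have hε : 0 < ε := lt_min one_pos (Real.rpow_pos_of_pos hc0 _)
  have hε1 : ε ≤ 1 := min_le_left _ _
  have hεx : ε ^ x / x ≤ η / 2 := by
    have h1 : ε ^ x ≤ ((x * η / 2) ^ (1 / x)) ^ x :=
      Real.rpow_le_rpow hε.le (min_le_right _ _) hx.le
    have h2 : ((x * η / 2) ^ (1 / x)) ^ x = x * η / 2 := by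
      rw [← Real.rpow_mul hc0.le, one_div, inv_mul_cancel₀ hx.ne', Real.rpow_one]
    rw [h2] at h1
    rw [div_le_iff₀ hx]
    calc ε ^ x ≤ x * η / 2 := h1
      _ = η / 2 * x := by ring
  -- tail term
  have htail : Tendsto (fun y : ℝ => max (ε ^ (x - 1)) 1 * (1 - ε) ^ (y - 1)) atTop (𝓝 0) := by
    have hb0 : (-1 : ℝ) < 1 - ε := by linarith
    have hb1 : 1 - ε < 1 := by linarith
    have := (tendsto_rpow_atTop_of_base_lt_one _ hb0 hb1).comp
      (tendsto_atTop_add_const_right atTop (-1 : ℝ) tendsto_id)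
    have h2 := this.const_mul (max (ε ^ (x - 1)) 1)
    simpa [Function.comp, sub_eq_add_neg, mul_zero] using h2
  have hev := (Metric.tendsto_atTop.1 htail) (η / 2 - η / 4) (by linarith)
  obtain ⟨N, hN⟩ := hev
  refine ⟨max N 1, fun y hy => ?_⟩
  have hy1 : 1 ≤ y := le_trans (le_max_right _ _) hy
  have hyN : y ≥ N := le_trans (le_max_left _ _) hy
  have hb := rbeta_le hx hy1 hε hε1
  have htb := hN y hyN
  rw [Real.dist_eq] at htb ⊢
  have hnn : (0:ℝ) ≤ rbeta x y := rbeta_nonneg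
  have h3 : max (ε ^ (x - 1)) 1 * (1 - ε) ^ (y - 1) < η / 2 - η / 4 + 0 := by
    have : |max (ε ^ (x - 1)) 1 * (1 - ε) ^ (y - 1) - 0| < η / 2 - η / 4 := htb
    have h4 : 0 ≤ max (ε ^ (x - 1)) 1 * (1 - ε) ^ (y - 1) := mul_nonneg (le_max_of_le_right zero_le_one) (Real.rpow_nonneg (by linarith) _)
    rw [sub_zero, abs_of_nonneg h4] at this; linarith
  rw [sub_zero, abs_of_nonneg hnn]
  calc rbeta x y ≤ ε ^ x / x + max (ε ^ (x - 1)) 1 * (1 - ε) ^ (y - 1) := hb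
    _ < η / 2 + (η / 2 - η / 4 + 0) := by linarith
    _ ≤ η := by linarith

end IEq
namespace IEq

lemma norm_cpoch_le (θ : ℂ) (n : ℕ) :
    ‖cpoch θ n‖ ≤ (max 1 ‖θ‖) ^ n * n.factorial := by
  induction n with
  | zero => simp [cpoch]
  | succ n ih =>
    have hq1 : (1:ℝ) ≤ max 1 ‖θ‖ := le_max_left _ _
    have hstep : ‖cpoch θ (n+1)‖ = ‖cpoch θ n‖ * ‖θ + (n:ℂ)‖ := by
      rw [cpoch, Finset.prod_range_succ, norm_mul]; rfl
    have hfac : ‖θ + (n:ℂ)‖ ≤ (max 1 ‖θ‖) * (n + 1) := by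
      calc ‖θ + (n:ℂ)‖ ≤ ‖θ‖ + ‖(n:ℂ)‖ := norm_add_le _ _
        _ = ‖θ‖ + n := by rw [Complex.norm_natCast]
        _ ≤ max 1 ‖θ‖ + max 1 ‖θ‖ * n := by
            have h1 : (n:ℝ) ≤ max 1 ‖θ‖ * n := le_mul_of_one_le_left (Nat.cast_nonneg n) hq1
            have h2 : ‖θ‖ ≤ max 1 ‖θ‖ := le_max_right _ _
            linarith
        _ = (max 1 ‖θ‖) * (n + 1) := by ring
    calc ‖cpoch θ (n+1)‖ = ‖cpoch θ n‖ * ‖θ + (n:ℂ)‖ := hstep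
      _ ≤ ((max 1 ‖θ‖) ^ n * n.factorial) * ((max 1 ‖θ‖) * (n + 1)) := by
          apply mul_le_mul ih hfac (norm_nonneg _)
          positivity
      _ = (max 1 ‖θ‖) ^ (n+1) * (n+1).factorial := by
          rw [Nat.factorial_succ]; push_cast; ring

lemma re_lin (α β' : ℂ) (n : ℕ) : (α * n + β').re = α.re * n + β'.re := by
  simp [Complex.add_re, Complex.mul_re]

lemma ml_aux (α θ β' : ℂ) (hα : 0 < α.re) (hb : 0 < β'.re) (R : ℝ) (hR : 0 ≤ R) :
    ∃ M : ℝ, 0 ≤ M ∧ (∀ z : ℂ, ‖z‖ ≤ R → ‖mlThree α β' θ z‖ ≤ M) ∧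
      ContinuousOn (mlThree α β' θ) (Metric.closedBall 0 R) := by
  set q : ℝ := max 1 ‖θ‖ with hqdef
  have hq0 : 0 < q := lt_of_lt_of_le one_pos (le_max_left _ _)
  set γfun : ℕ → ℝ := fun n => ‖Complex.Gamma (α * n + β')‖ with hγdef
  have hγpos : ∀ n, 0 < γfun n := by
    intro n
    apply norm_pos_iff.2
    apply Complex.Gamma_ne_zero_of_re_pos
    rw [re_lin]
    positivity
  set u : ℕ → ℝ := fun n => q ^ n * R ^ n * (γfun n)⁻¹ with hudef
  have hu0 : ∀ n, 0 ≤ u n := fun n => by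
    have := (hγpos n).le
    positivity
  -- beta bound
  have hbb : ∀ n : ℕ, ‖Complex.betaIntegral α (α * n + β')‖ ≤ rbeta α.re (α.re * n + β'.re) := by
    intro n
    rw [Complex.betaIntegral]
    have hnn : (0:ℝ) ≤ 1 := zero_le_one
    refine le_trans (intervalIntegral.norm_integral_le_abs_of_norm_le
      (g := fun t => t ^ (α.re - 1) * (1 - t) ^ ((α.re * n + β'.re) - 1)) ?_
      (rbeta_intable hα (show (0:ℝ) < α.re * n + β'.re by positivity))) ?_
    · have h1 : ∀ᵐ x ∂(volume.restrict (Set.uIoc (0:ℝ) 1)), x ∈ Set.uIoc (0:ℝ) 1 :=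
        ae_restrict_mem measurableSet_uIoc
      have h2 : ∀ᵐ x ∂(volume.restrict (Set.uIoc (0:ℝ) 1)), x ≠ 1 := by
        refine ae_restrict_of_ae ?_
        have h0 : (volume : Measure ℝ) {(1:ℝ)} = 0 := measure_singleton _
        exact (measure_eq_zero_iff_ae_notMem.mp h0).mono fun x hx => by simpa using hx
      filter_upwards [h1, h2] with x hx hx1
      rw [uIoc_of_le hnn] at hx
      have hx0 : 0 < x := hx.1
      have hx1' : x < 1 := lt_of_le_of_ne hx.2 hx1
      have hxa : ‖(x:ℂ) ^ (α - 1)‖ = x ^ (α.re - 1) := by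
        rw [Complex.norm_cpow_eq_rpow_re_of_pos hx0]
        norm_num
      have hxb : ‖(1 - (x:ℂ)) ^ (α * n + β' - 1)‖
          = (1 - x) ^ (α.re * n + β'.re - 1) := by
        have hcast : (1 - (x:ℂ)) = ((1 - x : ℝ) : ℂ) := by push_cast; ring
        rw [hcast, Complex.norm_cpow_eq_rpow_re_of_pos (by linarith)]
        congr 1
        rw [Complex.sub_re, re_lin]
        norm_num
      rw [norm_mul, hxa, hxb]
    · rw [abs_of_nonneg (by
        apply intervalIntegral.integral_nonneg hnn
        intro t ht
        exact mul_nonneg (Real.rpow_nonneg ht.1 _) (Real.rpow_nonneg (by linarith [ht.2]) _))]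
      exact le_of_eq rfl
  -- key recursion
  have hΓα : 0 < ‖Complex.Gamma α‖ := norm_pos_iff.2 (Complex.Gamma_ne_zero_of_re_pos hα)
  have hkey : ∀ n : ℕ, γfun n * ‖Complex.Gamma α‖
      = γfun (n+1) * ‖Complex.betaIntegral α (α * n + β')‖ := by
    intro n
    have hre : 0 < (α * n + β').re := by rw [re_lin]; positivity
    have hGG := Complex.Gamma_mul_Gamma_eq_betaIntegral hα hre
    have harg : α + (α * (n:ℂ) + β') = α * ((n:ℂ) + 1) + β' := by ring
    rw [harg] at hGG
    have h3 := congrArg norm hGG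
    rw [norm_mul, norm_mul] at h3
    show ‖Complex.Gamma (α * (n:ℂ) + β')‖ * ‖Complex.Gamma α‖
      = ‖Complex.Gamma (α * ((n+1:ℕ):ℂ) + β')‖ * ‖Complex.betaIntegral α (α * n + β')‖
    push_cast
    rw [mul_comm]
    exact h3
  -- summability
  have husum : Summable u := by
    apply summable_of_ratio_norm_eventually_le (r := 1/2) (by norm_num)
    have hx : Tendsto (fun n : ℕ => α.re * (n:ℝ) + β'.re) atTop atTop := by
      apply tendsto_atTop_add_const_right
      exact Tendsto.const_mul_atTop hα tendsto_natCast_atTop_atTop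
    have hsm := (tendsto_rbeta α.re hα).comp hx
    have hev : ∀ᶠ n : ℕ in atTop,
        rbeta α.re (α.re * n + β'.re) ≤ ‖Complex.Gamma α‖ / (2 * (q * R + 1)) := by
      have hpos : 0 < ‖Complex.Gamma α‖ / (2 * (q * R + 1)) := by positivity
      filter_upwards [hsm.eventually (eventually_le_nhds hpos)] with n hn using hn
    filter_upwards [hev] with n hn
    have hqR0 : 0 ≤ q * R := by positivity
    have hγn := hγpos n
    have hγn1 := hγpos (n+1)
    have hbnn : 0 ≤ ‖Complex.betaIntegral α (α * n + β')‖ := norm_nonneg _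
    have hb' : ‖Complex.betaIntegral α (α * n + β')‖ * (2 * (q * R + 1))
        ≤ ‖Complex.Gamma α‖ :=
      (le_div_iff₀ (by positivity)).1 (le_trans (hbb n) hn)
    have claim : q * R * γfun n ≤ 1/2 * γfun (n+1) := by
      have h1 : q * R * γfun n * ‖Complex.Gamma α‖
          ≤ 1/2 * γfun (n+1) * ‖Complex.Gamma α‖ := by
        have e : q * R * γfun n * ‖Complex.Gamma α‖
            = q * R * (γfun (n+1) * ‖Complex.betaIntegral α (α * n + β')‖) := by
          rw [mul_assoc, hkey n]
        rw [e]
        have h2 : q * R * (γfun (n+1) * ‖Complex.betaIntegral α (α * n + β')‖)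
            ≤ (q * R + 1) * (γfun (n+1) * ‖Complex.betaIntegral α (α * n + β')‖) := by
          have := mul_nonneg hγn1.le hbnn; nlinarith
        have h4 : γfun (n+1) * (‖Complex.betaIntegral α (α * n + β')‖ * (2 * (q * R + 1)))
            ≤ γfun (n+1) * ‖Complex.Gamma α‖ := mul_le_mul_of_nonneg_left hb' hγn1.le
        nlinarith
      exact le_of_mul_le_mul_right h1 hΓα
    rw [Real.norm_of_nonneg (hu0 _), Real.norm_of_nonneg (hu0 _)]
    show q ^ (n+1) * R ^ (n+1) * (γfun (n+1))⁻¹ ≤ 1/2 * (q ^ n * R ^ n * (γfun n)⁻¹)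
    have key2 : q * R * (γfun (n+1))⁻¹ ≤ 1/2 * (γfun n)⁻¹ := by
      rw [mul_comm (q*R) _, mul_comm (1/2 : ℝ) _, ← div_eq_inv_mul, ← div_eq_inv_mul,
        div_le_div_iff₀ hγn1 hγn]
      calc q * R * γfun n ≤ 1/2 * γfun (n+1) := claim
        _ = 1/2 * γfun (n+1) := rfl
    calc q ^ (n+1) * R ^ (n+1) * (γfun (n+1))⁻¹
        = (q ^ n * R ^ n) * (q * R * (γfun (n+1))⁻¹) := by ring
      _ ≤ (q ^ n * R ^ n) * (1/2 * (γfun n)⁻¹) :=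
          mul_le_mul_of_nonneg_left key2 (by positivity)
      _ = 1/2 * (q ^ n * R ^ n * (γfun n)⁻¹) := by ring
  -- term bound
  have hterm : ∀ (n : ℕ) (z : ℂ), ‖z‖ ≤ R →
      ‖cpoch θ n * (Complex.Gamma (α * n + β'))⁻¹ * z ^ n / (n.factorial : ℂ)‖ ≤ u n := by
    intro n z hz
    have hfac : (0:ℝ) < (n.factorial : ℝ) := by positivity
    rw [norm_div, norm_mul, norm_mul, norm_inv, norm_pow]
    have h1 := norm_cpoch_le θ n
    have h2 : ‖z‖ ^ n ≤ R ^ n := pow_le_pow_left₀ (norm_nonneg z) hz n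
    have h3 : ‖((n.factorial : ℕ) : ℂ)‖ = (n.factorial : ℝ) := by
      rw [Complex.norm_natCast]
    rw [h3]
    have hγi : 0 ≤ ‖Complex.Gamma (α * n + β')‖⁻¹ := inv_nonneg.2 (norm_nonneg _)
    have step : ‖cpoch θ n‖ * ‖Complex.Gamma (α * n + β')‖⁻¹ * ‖z‖ ^ n
        ≤ (q ^ n * n.factorial) * (γfun n)⁻¹ * R ^ n := by
      apply mul_le_mul _ h2 (by positivity) (by positivity)
      exact mul_le_mul h1 le_rfl hγi (by positivity)
    rw [div_le_iff₀ hfac]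
    calc ‖cpoch θ n‖ * ‖Complex.Gamma (α * n + β')‖⁻¹ * ‖z‖ ^ n
        ≤ (q ^ n * n.factorial) * (γfun n)⁻¹ * R ^ n := step
      _ = u n * (n.factorial : ℝ) := by simp only [hudef]; ring
  -- conclusion
  refine ⟨∑' n, u n, tsum_nonneg hu0, fun z hz => ?_, ?_⟩
  · have hsf : Summable (fun n : ℕ =>
        ‖cpoch θ n * (Complex.Gamma (α * n + β'))⁻¹ * z ^ n / (n.factorial : ℂ)‖) :=
      Summable.of_nonneg_of_le (fun n => norm_nonneg _) (fun n => hterm n z hz) husum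
    calc ‖mlThree α β' θ z‖
        ≤ ∑' n, ‖cpoch θ n * (Complex.Gamma (α * n + β'))⁻¹ * z ^ n / (n.factorial : ℂ)‖ :=
          norm_tsum_le_tsum_norm hsf
      _ ≤ ∑' n, u n := Summable.tsum_le_tsum (fun n => hterm n z hz) hsf husum
  · have : ContinuousOn (fun z : ℂ => ∑' n : ℕ,
        cpoch θ n * (Complex.Gamma (α * n + β'))⁻¹ * z ^ n / (n.factorial : ℂ))
        (Metric.closedBall 0 R) := by
      apply continuousOn_tsum (fun n => ?_) husum (fun n z hz => ?_)
      · exact ((continuous_const.mul (continuous_pow n)).div_const _).continuousOn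
      · exact hterm n z (by simpa [dist_zero_right] using Metric.mem_closedBall.1 hz)
    exact this

end IEq
namespace IEq

lemma I1 {X ρ γ : ℝ} (hX : 0 < X) (hρ : 0 < ρ) (hγ : 0 ≤ γ) :
    ∫ u in (0:ℝ)..X, (X - u) ^ (ρ - 1) * u ^ γ = rbeta ρ (γ + 1) * X ^ (γ + ρ) := by
  have h1 : (∫ u in (0:ℝ)..X, (X - u) ^ (ρ - 1) * u ^ γ)
      = ∫ u in (0:ℝ)..X, u ^ (ρ - 1) * (X - u) ^ γ := by
    have := intervalIntegral.integral_comp_sub_left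
      (fun u : ℝ => u ^ (ρ - 1) * (X - u) ^ γ) X (a := 0) (b := X)
    simp only [sub_zero, sub_self, sub_sub_cancel] at this
    exact this
  have h2 : (∫ v in (0:ℝ)..1, (fun u : ℝ => u ^ (ρ - 1) * (X - u) ^ γ) (X * v))
      = X⁻¹ • ∫ u in (0:ℝ)..X, u ^ (ρ - 1) * (X - u) ^ γ := by
    have := intervalIntegral.integral_comp_mul_left
      (fun u : ℝ => u ^ (ρ - 1) * (X - u) ^ γ) (c := X) hX.ne' (a := 0) (b := 1)
    simpa using this
  have h3 : (∫ v in (0:ℝ)..1, (fun u : ℝ => u ^ (ρ - 1) * (X - u) ^ γ) (X * v))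
      = X ^ (ρ - 1) * X ^ γ * rbeta ρ (γ + 1) := by
    have hcong : ∀ v ∈ uIcc (0:ℝ) 1,
        (X * v) ^ (ρ - 1) * (X - X * v) ^ γ
          = X ^ (ρ - 1) * X ^ γ * (v ^ (ρ - 1) * (1 - v) ^ γ) := by
      intro v hv
      rw [uIcc_of_le zero_le_one] at hv
      have hv0 : 0 ≤ v := hv.1
      have hv1 : v ≤ 1 := hv.2
      have e1 : (X * v) ^ (ρ - 1) = X ^ (ρ - 1) * v ^ (ρ - 1) :=
        Real.mul_rpow hX.le hv0
      have e2 : X - X * v = X * (1 - v) := by ring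
      have e3 : (X * (1 - v)) ^ γ = X ^ γ * (1 - v) ^ γ :=
        Real.mul_rpow hX.le (by linarith)
      rw [e1, e2, e3]; ring
    rw [intervalIntegral.integral_congr (g := fun v : ℝ =>
      X ^ (ρ - 1) * X ^ γ * (v ^ (ρ - 1) * (1 - v) ^ γ)) hcong]
    rw [intervalIntegral.integral_const_mul]
    congr 1
    rw [rbeta]
    congr 1
    ext v
    rw [add_sub_cancel_right]
  rw [h1]
  have h4 : (∫ u in (0:ℝ)..X, u ^ (ρ - 1) * (X - u) ^ γ)
      = X * (X ^ (ρ - 1) * X ^ γ * rbeta ρ (γ + 1)) := by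
    rw [← h3, h2, smul_eq_mul]
    field_simp
  rw [h4]
  have h5 : X * (X ^ (ρ - 1) * X ^ γ) = X ^ (γ + ρ) := by
    rw [show γ + ρ = 1 + (ρ - 1 + γ) by ring, Real.rpow_add hX 1 (ρ - 1 + γ),
      Real.rpow_one, Real.rpow_add hX (ρ - 1) γ]
  calc X * (X ^ (ρ - 1) * X ^ γ * rbeta ρ (γ + 1))
      = X * (X ^ (ρ - 1) * X ^ γ) * rbeta ρ (γ + 1) := by ring
    _ = X ^ (γ + ρ) * rbeta ρ (γ + 1) := by rw [h5]
    _ = rbeta ρ (γ + 1) * X ^ (γ + ρ) := by ring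

lemma base_intable {X ρ γ : ℝ} (hX : 0 < X) (hρ : 0 < ρ) (hγ : 0 ≤ γ) :
    IntervalIntegrable (fun u : ℝ => (X - u) ^ (ρ - 1) * u ^ γ) volume 0 X := by
  have hb : IntervalIntegrable (fun u : ℝ => (X - u) ^ (ρ - 1)) volume 0 X := by
    have := (intervalIntegral.intervalIntegrable_rpow' (r := ρ - 1) (by linarith)
      (a := 0) (b := X)).comp_sub_left X
    simpa using this.symm
  apply hb.mul_continuousOn
  intro u _
  exact (Real.continuousAt_rpow_const u γ (Or.inr hγ)).continuousWithinAt

section Psi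

variable {T : ℝ} {ψ : ℝ → ℝ}

lemma psi_sm (hT : 0 < T) (hψ : ContDiff ℝ 1 ψ) (hψ' : ∀ s ∈ Icc 0 T, 0 < deriv ψ s) :
    StrictMonoOn ψ (Icc 0 T) := by
  apply strictMonoOn_of_deriv_pos (convex_Icc 0 T) hψ.continuous.continuousOn
  intro x hx
  exact hψ' x (interior_subset hx)

/-- Change of variables for the weighted power integral. -/
lemma cv (hT : 0 < T) (hψ : ContDiff ℝ 1 ψ) (hψ0 : ψ 0 = 0)
    (hψ' : ∀ s ∈ Icc 0 T, 0 < deriv ψ s)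
    {t ρ γ : ℝ} (ht : t ∈ Icc 0 T) (ht0 : 0 < t) (hρ : 0 < ρ) (hγ : 0 ≤ γ) :
    IntegrableOn (fun s => (ψ t - ψ s) ^ (ρ - 1) * (ψ s) ^ γ * deriv ψ s) (Ioo 0 t) ∧
    ∫ s in Ioo 0 t, (ψ t - ψ s) ^ (ρ - 1) * (ψ s) ^ γ * deriv ψ s
      = rbeta ρ (γ + 1) * (ψ t) ^ (γ + ρ) := by
  have hsm := psi_sm hT hψ hψ'
  have h0T : (0:ℝ) ∈ Icc 0 T := ⟨le_rfl, hT.le⟩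
  have hX : 0 < ψ t := by
    have := hsm h0T ht ht0
    rwa [hψ0] at this
  set X := ψ t with hXdef
  -- image
  have himg : ψ '' Ioo 0 t = Ioo 0 X := by
    apply Subset.antisymm
    · rintro y ⟨s, hs, rfl⟩
      have hsI : s ∈ Icc 0 T := ⟨hs.1.le, le_trans hs.2.le ht.2⟩
      constructor
      · have := hsm h0T hsI hs.1; rwa [hψ0] at this
      · exact hsm hsI ht hs.2
    · have := intermediate_value_Ioo ht0.le
        (hψ.continuous.continuousOn : ContinuousOn ψ (Icc 0 t))
      rw [hψ0] at this
      exact this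
  have hinj : InjOn ψ (Ioo 0 t) :=
    (hsm.injOn).mono (Ioo_subset_Icc_self.trans (Icc_subset_Icc le_rfl ht.2))
  have hder : ∀ x ∈ Ioo 0 t, HasDerivWithinAt ψ (deriv ψ x) (Ioo 0 t) x := fun x _ =>
    ((hψ.differentiable one_ne_zero) x).hasDerivAt.hasDerivWithinAt
  set g : ℝ → ℝ := fun u => (X - u) ^ (ρ - 1) * u ^ γ with hgdef
  have hgint : IntegrableOn g (Ioo 0 X) :=
    (intervalIntegrable_iff_integrableOn_Ioo_of_le hX.le).1 (base_intable hX hρ hγ)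
  have heq : EqOn (fun x => |deriv ψ x| • g (ψ x))
      (fun s => (ψ t - ψ s) ^ (ρ - 1) * (ψ s) ^ γ * deriv ψ s) (Ioo 0 t) := by
    intro s hs
    have hsI : s ∈ Icc 0 T := ⟨hs.1.le, le_trans hs.2.le ht.2⟩
    have hd := hψ' s hsI
    simp only [smul_eq_mul, hgdef, abs_of_pos hd]
    ring
  constructor
  · have h1 : IntegrableOn (fun x => |deriv ψ x| • g (ψ x)) (Ioo 0 t) := by
      rw [← integrableOn_image_iff_integrableOn_abs_deriv_smul measurableSet_Ioo hder hinj g]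
      rw [himg]; exact hgint
    exact h1.congr_fun heq measurableSet_Ioo
  · have h2 : ∫ x in ψ '' Ioo 0 t, g x = ∫ x in Ioo 0 t, |deriv ψ x| • g (ψ x) :=
      integral_image_eq_integral_abs_deriv_smul measurableSet_Ioo hder hinj g
    rw [himg] at h2
    have h3 : ∫ x in Ioo 0 X, g x = rbeta ρ (γ + 1) * X ^ (γ + ρ) := by
      rw [← integral_Ioc_eq_integral_Ioo, ← intervalIntegral.integral_of_le hX.le]
      exact I1 hX hρ hγ
    rw [← setIntegral_congr_fun measurableSet_Ioo heq, ← h2, h3]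

end Psi
end IEq
namespace IEq

/-- kernel of the Prabhakar integral -/
def pker (α β' θ' ω : ℂ) (x : ℝ) : ℂ :=
  ((x : ℝ) : ℂ) ^ (β' - 1) * mlThree α β' θ' (ω * ((x : ℝ) : ℂ) ^ α)

lemma prabIPsi_eq (α β' θ' ω : ℂ) (ψ : ℝ → ℝ) (w : ℝ → ℂ) (t : ℝ) :
    prabIPsi α β' θ' ω 0 ψ w t
      = ∫ s in (0:ℝ)..t, pker α β' θ' ω (ψ t - ψ s) * w s * ((deriv ψ s : ℝ) : ℂ) := rfl

lemma pker_norm_le {α β' θ' ω : ℂ} {δ R M Q : ℝ}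
    (hδb : δ ≤ β'.re) (hM0 : 0 ≤ M)
    (hRb : ∀ r : ℝ, 0 < r → r ≤ Q → ‖ω * ((r : ℝ) : ℂ) ^ α‖ ≤ R)
    (hMb : ∀ z : ℂ, ‖z‖ ≤ R → ‖mlThree α β' θ' z‖ ≤ M)
    {r : ℝ} (hr : 0 < r) (hrQ : r ≤ Q) :
    ‖pker α β' θ' ω r‖ ≤ M * max 1 (Q ^ (β'.re - δ)) * r ^ (δ - 1) := by
  have h1 : ‖((r : ℝ) : ℂ) ^ (β' - 1)‖ = r ^ (β'.re - 1) := by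
    rw [Complex.norm_cpow_eq_rpow_re_of_pos hr, Complex.sub_re,
      Complex.one_re]
  have h2 : ‖mlThree α β' θ' (ω * ((r : ℝ) : ℂ) ^ α)‖ ≤ M := hMb _ (hRb r hr hrQ)
  have h3 : r ^ (β'.re - 1) = r ^ (δ - 1) * r ^ (β'.re - δ) := by
    rw [← Real.rpow_add hr]; ring_nf
  have h4 : r ^ (β'.re - δ) ≤ max 1 (Q ^ (β'.re - δ)) := by
    rcases le_total r 1 with hr1 | hr1
    · exact le_max_of_le_left (Real.rpow_le_one hr.le hr1 (by linarith))
    · exact le_max_of_le_right (Real.rpow_le_rpow hr.le hrQ (by linarith))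
  have h5 : 0 ≤ r ^ (δ - 1) := Real.rpow_nonneg hr.le _
  calc ‖pker α β' θ' ω r‖
      = r ^ (β'.re - 1) * ‖mlThree α β' θ' (ω * ((r : ℝ) : ℂ) ^ α)‖ := by
        rw [pker, norm_mul, h1]
    _ ≤ r ^ (β'.re - 1) * M :=
        mul_le_mul_of_nonneg_left h2 (Real.rpow_nonneg hr.le _)
    _ = r ^ (δ - 1) * r ^ (β'.re - δ) * M := by rw [h3]
    _ ≤ r ^ (δ - 1) * max 1 (Q ^ (β'.re - δ)) * M := by
        apply mul_le_mul_of_nonneg_right _ hM0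
        exact mul_le_mul_of_nonneg_left h4 h5
    _ = M * max 1 (Q ^ (β'.re - δ)) * r ^ (δ - 1) := by ring

section PrabCtx

variable {α β' θ' ω : ℂ} {T : ℝ} {ψ : ℝ → ℝ} {δ R M : ℝ} {w : ℝ → ℂ}

/-- all contextual hypotheses bundled -/
structure Ctx (α β' θ' ω : ℂ) (T : ℝ) (ψ : ℝ → ℝ) (δ R M : ℝ) : Prop where
  hα : 0 < α.re
  hb : 0 < β'.re
  hT : 0 < T
  hψ : ContDiff ℝ 1 ψ
  hψ0 : ψ 0 = 0
  hψ' : ∀ s ∈ Icc 0 T, 0 < deriv ψ s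
  hδ0 : 0 < δ
  hδ1 : δ ≤ 1
  hδb : δ ≤ β'.re
  hM0 : 0 ≤ M
  hRb : ∀ r : ℝ, 0 < r → r ≤ ψ T + 1 → ‖ω * ((r : ℝ) : ℂ) ^ α‖ ≤ R
  hMb : ∀ z : ℂ, ‖z‖ ≤ R → ‖mlThree α β' θ' z‖ ≤ M
  hMLc : ContinuousOn (mlThree α β' θ') (Metric.closedBall 0 R)

namespace Ctx

variable (hc : Ctx α β' θ' ω T ψ δ R M)
include hc

lemma hsm : StrictMonoOn ψ (Icc 0 T) := psi_sm hc.hT hc.hψ hc.hψ'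

lemma psi_mem {s : ℝ} (hs : s ∈ Icc 0 T) : 0 ≤ ψ s ∧ ψ s ≤ ψ T := by
  have h0 : (0:ℝ) ∈ Icc 0 T := ⟨le_rfl, hc.hT.le⟩
  have hTm : T ∈ Icc 0 T := ⟨hc.hT.le, le_rfl⟩
  constructor
  · have := hc.hsm.monotoneOn h0 hs hs.1; rwa [hc.hψ0] at this
  · exact hc.hsm.monotoneOn hs hTm hs.2

lemma hP : 0 < ψ T := by
  have h0 : (0:ℝ) ∈ Icc 0 T := ⟨le_rfl, hc.hT.le⟩
  have hTm : T ∈ Icc 0 T := ⟨hc.hT.le, le_rfl⟩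
  have := hc.hsm h0 hTm hc.hT
  rwa [hc.hψ0] at this

lemma rfacts {s t : ℝ} (ht : t ∈ Icc 0 T) (hs : s ∈ Ioo 0 t) :
    0 < ψ t - ψ s ∧ ψ t - ψ s ≤ ψ T + 1 := by
  have hsI : s ∈ Icc 0 T := ⟨hs.1.le, le_trans hs.2.le ht.2⟩
  have h1 : ψ s < ψ t := hc.hsm hsI ht hs.2
  have h2 := (hc.psi_mem hsI).1
  have h3 := (hc.psi_mem ht).2
  exact ⟨by linarith, by linarith⟩

lemma integrand_contOn (hw : Continuous w) {t : ℝ} (ht : t ∈ Icc 0 T) :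
    ContinuousOn
      (fun s => pker α β' θ' ω (ψ t - ψ s) * w s * ((deriv ψ s : ℝ) : ℂ)) (Ioo 0 t) := by
  have hrc : Continuous (fun s => ((ψ t - ψ s : ℝ) : ℂ)) :=
    Complex.continuous_ofReal.comp (continuous_const.sub hc.hψ.continuous)
  have hc1 : ContinuousOn (fun s => ((ψ t - ψ s : ℝ) : ℂ) ^ (β' - 1)) (Ioo 0 t) := by
    intro s hs
    exact (hrc.continuousAt.cpow continuousAt_const
      (Complex.ofReal_mem_slitPlane.2 (hc.rfacts ht hs).1)).continuousWithinAt
  have hc2 : ContinuousOn (fun s => ω * ((ψ t - ψ s : ℝ) : ℂ) ^ α) (Ioo 0 t) := by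
    apply continuousOn_const.mul
    intro s hs
    exact (hrc.continuousAt.cpow continuousAt_const
      (Complex.ofReal_mem_slitPlane.2 (hc.rfacts ht hs).1)).continuousWithinAt
  have hc3 : ContinuousOn
      (fun s => mlThree α β' θ' (ω * ((ψ t - ψ s : ℝ) : ℂ) ^ α)) (Ioo 0 t) := by
    apply hc.hMLc.comp hc2
    intro s hs
    rw [Metric.mem_closedBall, dist_zero_right]
    exact hc.hRb _ (hc.rfacts ht hs).1 (hc.rfacts ht hs).2
  exact (((hc1.mul hc3).mul hw.continuousOn).mul
    ((Complex.continuous_ofReal.comp (hc.hψ.continuous_deriv le_rfl)).continuousOn))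

lemma integrand_norm_le (hw : Continuous w) {c γ : ℝ} (hcn : 0 ≤ c) (hγ : 0 ≤ γ)
    (hwb : ∀ s ∈ Icc 0 T, ‖w s‖ ≤ c * ψ s ^ γ)
    {t : ℝ} (ht : t ∈ Icc 0 T) {s : ℝ} (hs : s ∈ Ioo 0 t) :
    ‖pker α β' θ' ω (ψ t - ψ s) * w s * ((deriv ψ s : ℝ) : ℂ)‖
      ≤ M * max 1 ((ψ T + 1) ^ (β'.re - δ)) * c
        * ((ψ t - ψ s) ^ (δ - 1) * ψ s ^ γ * deriv ψ s) := by
  have hsI : s ∈ Icc 0 T := ⟨hs.1.le, le_trans hs.2.le ht.2⟩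
  have hd := hc.hψ' s hsI
  have hrf := hc.rfacts ht hs
  have h1 : ‖pker α β' θ' ω (ψ t - ψ s)‖
      ≤ M * max 1 ((ψ T + 1) ^ (β'.re - δ)) * (ψ t - ψ s) ^ (δ - 1) :=
    pker_norm_le hc.hδb hc.hM0 hc.hRb hc.hMb hrf.1 hrf.2
  have h2 := hwb s hsI
  have h3 : ‖((deriv ψ s : ℝ) : ℂ)‖ = deriv ψ s := by
    rw [Complex.norm_real, Real.norm_eq_abs, abs_of_pos hd]
  calc ‖pker α β' θ' ω (ψ t - ψ s) * w s * ((deriv ψ s : ℝ) : ℂ)‖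
      = ‖pker α β' θ' ω (ψ t - ψ s)‖ * ‖w s‖ * deriv ψ s := by
        rw [norm_mul, norm_mul, h3]
    _ ≤ (M * max 1 ((ψ T + 1) ^ (β'.re - δ)) * (ψ t - ψ s) ^ (δ - 1))
          * (c * ψ s ^ γ) * deriv ψ s := by
        apply mul_le_mul_of_nonneg_right _ hd.le
        exact mul_le_mul h1 h2 (norm_nonneg _)
          (mul_nonneg (mul_nonneg hc.hM0 (le_max_of_le_left zero_le_one))
            (Real.rpow_nonneg (hc.rfacts ht hs).1.le _))
    _ = M * max 1 ((ψ T + 1) ^ (β'.re - δ)) * c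
          * ((ψ t - ψ s) ^ (δ - 1) * ψ s ^ γ * deriv ψ s) := by ring

lemma integrand_intOn (hw : Continuous w) {W : ℝ} (hW0 : 0 ≤ W)
    (hWb : ∀ s ∈ Icc 0 T, ‖w s‖ ≤ W) {t : ℝ} (ht : t ∈ Icc 0 T) :
    IntervalIntegrable
      (fun s => pker α β' θ' ω (ψ t - ψ s) * w s * ((deriv ψ s : ℝ) : ℂ)) volume 0 t := by
  rcases eq_or_lt_of_le ht.1 with h0 | ht0
  · rw [← h0]
  · rw [intervalIntegrable_iff_integrableOn_Ioo_of_le ht0.le]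
    have hWb' : ∀ s ∈ Icc 0 T, ‖w s‖ ≤ W * ψ s ^ (0:ℝ) := by
      intro s hsI
      rw [Real.rpow_zero, mul_one]
      exact hWb s hsI
    have hdom : IntegrableOn
        (fun s => (ψ t - ψ s) ^ (δ - 1) * ψ s ^ (0:ℝ) * deriv ψ s) (Ioo 0 t) :=
      (cv hc.hT hc.hψ hc.hψ0 hc.hψ' ht ht0 hc.hδ0 le_rfl).1
    have hdom2 : IntegrableOn (fun s => M * max 1 ((ψ T + 1) ^ (β'.re - δ)) * W *
        ((ψ t - ψ s) ^ (δ - 1) * ψ s ^ (0:ℝ) * deriv ψ s)) (Ioo 0 t) :=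
      hdom.const_mul _
    apply Integrable.mono' hdom2
      ((hc.integrand_contOn hw ht).aestronglyMeasurable measurableSet_Ioo)
    apply ae_restrict_of_forall_mem measurableSet_Ioo
    intro s hs
    exact hc.integrand_norm_le hw hW0 le_rfl hWb' ht hs

lemma prab_norm_le (hw : Continuous w) {c γ : ℝ} (hcn : 0 ≤ c) (hγ : 0 ≤ γ)
    (hwb : ∀ s ∈ Icc 0 T, ‖w s‖ ≤ c * ψ s ^ γ) {t : ℝ} (ht : t ∈ Icc 0 T) :
    ‖prabIPsi α β' θ' ω 0 ψ w t‖
      ≤ M * max 1 ((ψ T + 1) ^ (β'.re - δ)) * c * rbeta δ (γ + 1) * ψ t ^ (γ + δ) := by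
  have hM0 := hc.hM0
  have hγδ : (0:ℝ) < γ + δ := by linarith [hc.hδ0]
  rcases eq_or_lt_of_le ht.1 with h0 | ht0
  · rw [prabIPsi_eq, ← h0, intervalIntegral.integral_same, norm_zero, hc.hψ0,
      Real.zero_rpow hγδ.ne', mul_zero]
  · rw [prabIPsi_eq]
    have hcv := cv hc.hT hc.hψ hc.hψ0 hc.hψ' ht ht0 hc.hδ0 hγ
    have hK0 : 0 ≤ M * max 1 ((ψ T + 1) ^ (β'.re - δ)) * c := by positivity
    have hDint : IntervalIntegrable (fun s => M * max 1 ((ψ T + 1) ^ (β'.re - δ)) * c *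
        ((ψ t - ψ s) ^ (δ - 1) * ψ s ^ γ * deriv ψ s)) volume 0 t :=
      (intervalIntegrable_iff_integrableOn_Ioo_of_le ht0.le).2 (hcv.1.const_mul _)
    have hae : ∀ᵐ s ∂(volume.restrict (Set.uIoc 0 t)),
        ‖pker α β' θ' ω (ψ t - ψ s) * w s * ((deriv ψ s : ℝ) : ℂ)‖
          ≤ M * max 1 ((ψ T + 1) ^ (β'.re - δ)) * c
            * ((ψ t - ψ s) ^ (δ - 1) * ψ s ^ γ * deriv ψ s) := by
      rw [uIoc_of_le ht0.le]
      have h1 : ∀ᵐ s ∂(volume.restrict (Ioc 0 t)), s ∈ Ioc 0 t :=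
        ae_restrict_mem measurableSet_Ioc
      have h2 : ∀ᵐ s ∂(volume.restrict (Ioc 0 t)), s ≠ t := by
        refine ae_restrict_of_ae ?_
        have h0' : (volume : Measure ℝ) {t} = 0 := measure_singleton _
        exact (measure_eq_zero_iff_ae_notMem.mp h0').mono fun x hx => by simpa using hx
      filter_upwards [h1, h2] with s hs hst
      exact hc.integrand_norm_le hw hcn hγ hwb ht ⟨hs.1, lt_of_le_of_ne hs.2 hst⟩
    refine le_trans (intervalIntegral.norm_integral_le_abs_of_norm_le hae hDint) ?_
    have hval : (∫ s in (0:ℝ)..t, M * max 1 ((ψ T + 1) ^ (β'.re - δ)) * c *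
        ((ψ t - ψ s) ^ (δ - 1) * ψ s ^ γ * deriv ψ s))
        = M * max 1 ((ψ T + 1) ^ (β'.re - δ)) * c * (rbeta δ (γ + 1) * ψ t ^ (γ + δ)) := by
      rw [intervalIntegral.integral_of_le ht0.le, integral_Ioc_eq_integral_Ioo,
        MeasureTheory.integral_const_mul, hcv.2]
    have h6 : 0 ≤ rbeta δ (γ + 1) * ψ t ^ (γ + δ) :=
      mul_nonneg rbeta_nonneg (Real.rpow_nonneg (hc.psi_mem ht).1 _)
    rw [hval, abs_of_nonneg (mul_nonneg hK0 h6)]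
    exact le_of_eq (by ring)

lemma prab_contOn (hw : Continuous w) :
    ContinuousOn (fun t => prabIPsi α β' θ' ω 0 ψ w t) (Icc 0 T) := by
  obtain ⟨W₀, hW₀⟩ := isCompact_Icc.exists_bound_of_continuousOn
    (hw.continuousOn : ContinuousOn w (Icc (0:ℝ) T))
  set W := max W₀ 0 with hWdef
  have hW0 : 0 ≤ W := le_max_right _ _
  have hWb : ∀ s ∈ Icc 0 T, ‖w s‖ ≤ W := fun s hs => le_trans (hW₀ s hs) (le_max_left _ _)
  have hP := hc.hP
  have hQ1 : (1:ℝ) ≤ ψ T + 1 := by linarith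
  set M'' := M * max 1 ((ψ T + 1) ^ (β'.re - δ)) with hM''def
  have hM''0 : 0 ≤ M'' := mul_nonneg hc.hM0 (le_max_of_le_left zero_le_one)
  have hεpos : ∀ n : ℕ, (0:ℝ) < (1/((n:ℝ)+1)) := fun n => by positivity
  have hε1 : ∀ n : ℕ, (1/((n:ℝ)+1)) ≤ 1 := fun n => by
    rw [div_le_one (by positivity)]
    have : (0:ℝ) ≤ (n:ℝ) := Nat.cast_nonneg n
    linarith
  set Jn : ℕ → ℝ → ℂ := fun n t => ∫ s in (0:ℝ)..t,
    pker α β' θ' ω (min (max (ψ t - ψ s) ((1/((n:ℝ)+1)))) (ψ T + 1)) * w s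
      * ((deriv ψ s : ℝ) : ℂ) with hJndef
  have hclamp_mem : ∀ (n : ℕ) (r : ℝ),
      min (max r ((1/((n:ℝ)+1)))) (ψ T + 1) ∈ Icc ((1/((n:ℝ)+1))) (ψ T + 1) := by
    intro n r
    exact ⟨le_min (le_max_right _ _) (le_trans (hε1 n) hQ1), min_le_right _ _⟩
  have hker : ∀ n : ℕ, ContinuousOn (fun r : ℝ => pker α β' θ' ω r)
      (Icc ((1/((n:ℝ)+1))) (ψ T + 1)) := by
    intro n
    have hcp : ContinuousOn (fun r : ℝ => ((r:ℝ):ℂ) ^ (β' - 1)) (Icc ((1/((n:ℝ)+1))) (ψ T + 1)) := by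
      intro r hr
      have hr0 : 0 < r := lt_of_lt_of_le (hεpos n) hr.1
      exact (Complex.continuous_ofReal.continuousAt.cpow continuousAt_const
        (Complex.ofReal_mem_slitPlane.2 hr0)).continuousWithinAt
    have hcz : ContinuousOn (fun r : ℝ => ω * ((r:ℝ):ℂ) ^ α) (Icc ((1/((n:ℝ)+1))) (ψ T + 1)) := by
      apply continuousOn_const.mul
      intro r hr
      have hr0 : 0 < r := lt_of_lt_of_le (hεpos n) hr.1
      exact (Complex.continuous_ofReal.continuousAt.cpow continuousAt_const
        (Complex.ofReal_mem_slitPlane.2 hr0)).continuousWithinAt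
    have hcml : ContinuousOn (fun r : ℝ => mlThree α β' θ' (ω * ((r:ℝ):ℂ) ^ α))
        (Icc ((1/((n:ℝ)+1))) (ψ T + 1)) := by
      apply hc.hMLc.comp hcz
      intro r hr
      rw [Metric.mem_closedBall, dist_zero_right]
      exact hc.hRb r (lt_of_lt_of_le (hεpos n) hr.1) hr.2
    exact hcp.mul hcml
  have hKc_cont : ∀ n : ℕ, Continuous (Function.uncurry (fun t s : ℝ =>
      pker α β' θ' ω (min (max (ψ t - ψ s) ((1/((n:ℝ)+1)))) (ψ T + 1)) * w s
        * ((deriv ψ s : ℝ) : ℂ))) := by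
    intro n
    have hcl : Continuous (fun p : ℝ × ℝ => min (max (ψ p.1 - ψ p.2) ((1/((n:ℝ)+1)))) (ψ T + 1)) := by
      apply Continuous.min _ continuous_const
      apply Continuous.max _ continuous_const
      exact (hc.hψ.continuous.comp continuous_fst).sub (hc.hψ.continuous.comp continuous_snd)
    have h1 : Continuous (fun p : ℝ × ℝ =>
        pker α β' θ' ω (min (max (ψ p.1 - ψ p.2) ((1/((n:ℝ)+1)))) (ψ T + 1))) :=
      (hker n).comp_continuous hcl (fun p => hclamp_mem n _)
    exact ((h1.mul (hw.comp continuous_snd)).mul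
      (Complex.continuous_ofReal.comp ((hc.hψ.continuous_deriv le_rfl).comp continuous_snd)))
  have hJncont : ∀ n : ℕ, Continuous (Jn n) := by
    intro n
    exact intervalIntegral.continuous_parametric_intervalIntegral_of_continuous (hKc_cont n) continuous_id
  -- uniform estimate
  set Cst := 2 * M'' * W * rbeta (δ/2) 1 * (ψ T) ^ (δ/2) with hCstdef
  have hCst0 : 0 ≤ Cst := by
    exact mul_nonneg (mul_nonneg (mul_nonneg (by linarith) hW0) rbeta_nonneg)
      (Real.rpow_nonneg hP.le _)
  have hdiff : ∀ (n : ℕ), ∀ t ∈ Icc (0:ℝ) T,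
      ‖prabIPsi α β' θ' ω 0 ψ w t - Jn n t‖ ≤ Cst * ((1/((n:ℝ)+1))) ^ (δ/2) := by
    intro n t ht
    have hε := hεpos n
    have hRHS0 : 0 ≤ Cst * ((1/((n:ℝ)+1))) ^ (δ/2) :=
      mul_nonneg hCst0 (Real.rpow_nonneg hε.le _)
    rcases eq_or_lt_of_le ht.1 with h0 | ht0
    · rw [prabIPsi_eq, ← h0, intervalIntegral.integral_same]
      simp only [hJndef]
      rw [intervalIntegral.integral_same, sub_zero, norm_zero]
      exact hRHS0
    · have hfint := hc.integrand_intOn hw hW0 hWb ht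
      have hfn_cont : Continuous (fun s : ℝ =>
          pker α β' θ' ω (min (max (ψ t - ψ s) ((1/((n:ℝ)+1)))) (ψ T + 1)) * w s
            * ((deriv ψ s : ℝ) : ℂ)) := by
        have hcl : Continuous (fun s : ℝ => min (max (ψ t - ψ s) ((1/((n:ℝ)+1)))) (ψ T + 1)) := by
          apply Continuous.min _ continuous_const
          exact Continuous.max (continuous_const.sub hc.hψ.continuous) continuous_const
        have h1 : Continuous (fun s : ℝ =>
            pker α β' θ' ω (min (max (ψ t - ψ s) ((1/((n:ℝ)+1)))) (ψ T + 1))) :=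
          (hker n).comp_continuous hcl (fun s => hclamp_mem n _)
        exact (h1.mul hw).mul
          (Complex.continuous_ofReal.comp (hc.hψ.continuous_deriv le_rfl))
      have hfnint : IntervalIntegrable (fun s =>
          pker α β' θ' ω (min (max (ψ t - ψ s) ((1/((n:ℝ)+1)))) (ψ T + 1)) * w s
            * ((deriv ψ s : ℝ) : ℂ)) volume 0 t := hfn_cont.intervalIntegrable _ _
      rw [prabIPsi_eq]
      have hJneq : Jn n t = ∫ s in (0:ℝ)..t,
          pker α β' θ' ω (min (max (ψ t - ψ s) ((1/((n:ℝ)+1)))) (ψ T + 1)) * w s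
            * ((deriv ψ s : ℝ) : ℂ) := rfl
      rw [hJneq, ← intervalIntegral.integral_sub hfint hfnint]
      have hcv2 := cv hc.hT hc.hψ hc.hψ0 hc.hψ' ht ht0 (by linarith [hc.hδ0] : (0:ℝ) < δ/2)
        (le_refl (0:ℝ))
      have hD2int : IntervalIntegrable (fun s => 2 * M'' * W * ((1/((n:ℝ)+1))) ^ (δ/2) *
          ((ψ t - ψ s) ^ (δ/2 - 1) * ψ s ^ (0:ℝ) * deriv ψ s)) volume 0 t :=
        (intervalIntegrable_iff_integrableOn_Ioo_of_le ht0.le).2 (hcv2.1.const_mul _)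
      have hae : ∀ᵐ s ∂(volume.restrict (Set.uIoc 0 t)),
          ‖(pker α β' θ' ω (ψ t - ψ s) * w s * ((deriv ψ s : ℝ) : ℂ))
            - pker α β' θ' ω (min (max (ψ t - ψ s) ((1/((n:ℝ)+1)))) (ψ T + 1)) * w s
              * ((deriv ψ s : ℝ) : ℂ)‖
          ≤ 2 * M'' * W * ((1/((n:ℝ)+1))) ^ (δ/2) *
            ((ψ t - ψ s) ^ (δ/2 - 1) * ψ s ^ (0:ℝ) * deriv ψ s) := by
        rw [uIoc_of_le ht0.le]
        have h1 : ∀ᵐ s ∂(volume.restrict (Ioc 0 t)), s ∈ Ioc 0 t :=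
          ae_restrict_mem measurableSet_Ioc
        have h2 : ∀ᵐ s ∂(volume.restrict (Ioc 0 t)), s ≠ t := by
          refine ae_restrict_of_ae ?_
          have h0' : (volume : Measure ℝ) {t} = 0 := measure_singleton _
          exact (measure_eq_zero_iff_ae_notMem.mp h0').mono fun x hx => by simpa using hx
        filter_upwards [h1, h2] with s hs hst
        have hsO : s ∈ Ioo 0 t := ⟨hs.1, lt_of_le_of_ne hs.2 hst⟩
        have hsI : s ∈ Icc 0 T := ⟨hsO.1.le, le_trans hsO.2.le ht.2⟩
        have hrf := hc.rfacts ht hsO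
        have hd := hc.hψ' s hsI
        have hψs0 : ψ s ^ (0:ℝ) = 1 := Real.rpow_zero _
        set r := ψ t - ψ s with hrdef
        rcases le_or_gt ((1/((n:ℝ)+1)) : ℝ) r with hcase | hcase
        · have hclamp : min (max r ((1/((n:ℝ)+1)))) (ψ T + 1) = r := by
            rw [max_eq_left hcase, min_eq_left hrf.2]
          rw [hclamp, sub_self, norm_zero]
          apply mul_nonneg
          · exact mul_nonneg (mul_nonneg (by linarith) hW0)
              (Real.rpow_nonneg (hεpos n).le _)
          · exact mul_nonneg (mul_nonneg (Real.rpow_nonneg hrf.1.le _)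
              (Real.rpow_nonneg (hc.psi_mem hsI).1 _)) hd.le
        · have hclamp : min (max r ((1/((n:ℝ)+1)))) (ψ T + 1) = (1/((n:ℝ)+1)) := by
            rw [max_eq_right hcase.le, min_eq_left (le_trans (hε1 n) hQ1)]
          rw [hclamp]
          have hb1 : ‖pker α β' θ' ω r * w s * ((deriv ψ s : ℝ) : ℂ)‖
              ≤ M'' * r ^ (δ - 1) * W * deriv ψ s := by
            have hk := pker_norm_le hc.hδb hc.hM0 hc.hRb hc.hMb hrf.1 hrf.2
            have hnd : ‖((deriv ψ s : ℝ) : ℂ)‖ = deriv ψ s := by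
              rw [Complex.norm_real, Real.norm_eq_abs, abs_of_pos hd]
            rw [norm_mul, norm_mul, hnd]
            apply mul_le_mul_of_nonneg_right _ hd.le
            exact mul_le_mul hk (hWb s hsI) (norm_nonneg _)
              (mul_nonneg hM''0 (Real.rpow_nonneg hrf.1.le _))
          have hb2 : ‖pker α β' θ' ω ((1/((n:ℝ)+1))) * w s * ((deriv ψ s : ℝ) : ℂ)‖
              ≤ M'' * r ^ (δ - 1) * W * deriv ψ s := by
            have hk := pker_norm_le hc.hδb hc.hM0 hc.hRb hc.hMb (hεpos n)
              (le_trans (hε1 n) hQ1)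
            have hεr : ((1:ℝ)/(n+1)) ^ (δ - 1) ≤ r ^ (δ - 1) :=
              Real.rpow_le_rpow_of_nonpos hrf.1 hcase.le (by linarith [hc.hδ1])
            have hnd : ‖((deriv ψ s : ℝ) : ℂ)‖ = deriv ψ s := by
              rw [Complex.norm_real, Real.norm_eq_abs, abs_of_pos hd]
            rw [norm_mul, norm_mul, hnd]
            apply mul_le_mul_of_nonneg_right _ hd.le
            apply mul_le_mul _ (hWb s hsI) (norm_nonneg _)
              (mul_nonneg hM''0 (Real.rpow_nonneg hrf.1.le _))
            exact le_trans hk (mul_le_mul_of_nonneg_left hεr hM''0)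
          have hsplit : r ^ (δ - 1) ≤ r ^ (δ/2 - 1) * ((1/((n:ℝ)+1))) ^ (δ/2) := by
            have he : r ^ (δ - 1) = r ^ (δ/2 - 1) * r ^ (δ/2) := by
              rw [← Real.rpow_add hrf.1]; ring_nf
            rw [he]
            apply mul_le_mul_of_nonneg_left
              (Real.rpow_le_rpow hrf.1.le hcase.le (by linarith [hc.hδ0]))
              (Real.rpow_nonneg hrf.1.le _)
          calc ‖(pker α β' θ' ω r * w s * ((deriv ψ s : ℝ) : ℂ))
              - pker α β' θ' ω ((1/((n:ℝ)+1))) * w s * ((deriv ψ s : ℝ) : ℂ)‖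
              ≤ ‖pker α β' θ' ω r * w s * ((deriv ψ s : ℝ) : ℂ)‖
                + ‖pker α β' θ' ω ((1/((n:ℝ)+1))) * w s * ((deriv ψ s : ℝ) : ℂ)‖ :=
                norm_sub_le _ _
            _ ≤ 2 * (M'' * r ^ (δ - 1) * W * deriv ψ s) := by linarith
            _ ≤ 2 * (M'' * (r ^ (δ/2 - 1) * ((1/((n:ℝ)+1))) ^ (δ/2)) * W * deriv ψ s) := by
                apply mul_le_mul_of_nonneg_left _ (by norm_num)
                apply mul_le_mul_of_nonneg_right _ hd.le
                apply mul_le_mul_of_nonneg_right _ hW0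
                exact mul_le_mul_of_nonneg_left hsplit hM''0
            _ = 2 * M'' * W * ((1/((n:ℝ)+1))) ^ (δ/2) *
                (r ^ (δ/2 - 1) * ψ s ^ (0:ℝ) * deriv ψ s) := by
                rw [hψs0]; ring
      refine le_trans (intervalIntegral.norm_integral_le_abs_of_norm_le hae hD2int) ?_
      have hval : (∫ s in (0:ℝ)..t, 2 * M'' * W * ((1/((n:ℝ)+1))) ^ (δ/2) *
          ((ψ t - ψ s) ^ (δ/2 - 1) * ψ s ^ (0:ℝ) * deriv ψ s))
          = 2 * M'' * W * ((1/((n:ℝ)+1))) ^ (δ/2) * (rbeta (δ/2) (0+1) * ψ t ^ (0+δ/2)) := by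
        rw [intervalIntegral.integral_of_le ht0.le, integral_Ioc_eq_integral_Ioo,
          MeasureTheory.integral_const_mul, hcv2.2]
      have hnn : 0 ≤ 2 * M'' * W * ((1/((n:ℝ)+1))) ^ (δ/2) * (rbeta (δ/2) (0+1) * ψ t ^ (0+δ/2)) := by
        apply mul_nonneg
        · exact mul_nonneg (mul_nonneg (by linarith) hW0) (Real.rpow_nonneg hε.le _)
        · exact mul_nonneg rbeta_nonneg (Real.rpow_nonneg (hc.psi_mem ht).1 _)
      rw [hval, abs_of_nonneg hnn]
      -- final
      have hψt := hc.psi_mem ht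
      have h7 : ψ t ^ ((0:ℝ)+δ/2) ≤ ψ T ^ (δ/2) := by
        rw [zero_add]
        exact Real.rpow_le_rpow hψt.1 hψt.2 (by linarith [hc.hδ0])
      have h8 : (0:ℝ)+1 = 1 := zero_add 1
      rw [h8, hCstdef]
      calc 2 * M'' * W * ((1/((n:ℝ)+1))) ^ (δ/2) * (rbeta (δ/2) 1 * ψ t ^ ((0:ℝ)+δ/2))
          ≤ 2 * M'' * W * ((1/((n:ℝ)+1))) ^ (δ/2) * (rbeta (δ/2) 1 * ψ T ^ (δ/2)) := by
            apply mul_le_mul_of_nonneg_left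
              (mul_le_mul_of_nonneg_left h7 rbeta_nonneg)
            exact mul_nonneg (mul_nonneg (by linarith) hW0) (Real.rpow_nonneg hε.le _)
        _ = 2 * M'' * W * rbeta (δ/2) 1 * ψ T ^ (δ/2) * ((1/((n:ℝ)+1))) ^ (δ/2) := by ring
  -- uniform convergence and conclusion
  have htu : TendstoUniformlyOn Jn (fun t => prabIPsi α β' θ' ω 0 ψ w t) atTop (Icc 0 T) := by
    rw [Metric.tendstoUniformlyOn_iff]
    intro ε' hε'
    have h1 : Tendsto (fun n : ℕ => (1/((n:ℝ)+1))) atTop (𝓝 0) :=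
      tendsto_one_div_add_atTop_nhds_zero_nat
    have h2 : ContinuousAt (fun x : ℝ => x ^ (δ/2)) 0 :=
      Real.continuousAt_rpow_const 0 _ (Or.inr (by linarith [hc.hδ0]))
    have h3 := h2.tendsto.comp h1
    rw [Real.zero_rpow (by linarith [hc.hδ0] : δ/2 ≠ 0)] at h3
    have h4 := h3.const_mul Cst
    rw [mul_zero] at h4
    have hlt : ∀ᶠ x : ℝ in 𝓝 0, x < ε' := eventually_lt_nhds hε'
    filter_upwards [h4.eventually hlt] with n hn t ht
    rw [dist_eq_norm]
    exact lt_of_le_of_lt (hdiff n t ht) hn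
  exact htu.continuousOn (Eventually.of_forall fun n => (hJncont n).continuousOn).frequently

end Ctx
end PrabCtx
end IEq

/-- Core of Theorem 3.4: the integral equation with respect to a function `ψ`. Under the
stated hypotheses there is a unique continuous `u : [0,T] → ℂ` with
`u(t) + ∑_{i=1}^m σᵢ(t)·(𝕀^{θ₀−θᵢ;ψ}_{α,β₀−βᵢ,ω;0} u)(t) = g(t)` on `[0,T]`; moreover `u`
is the uniform limit on `[0,T]` of the partial sums of `∑_k (−1)^k A_ψ^k g`. -/
theorem integral_equation_wrt_function_unique_solution (m : ℕ) (hm : 1 ≤ m) (α ω : ℂ)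
    (β θ : ℕ → ℂ) (hα : 0 < α.re) (hβm : 0 ≤ (β m).re)
    (hmono : ∀ i j : ℕ, i < j → j ≤ m → (β j).re < (β i).re)
    (T : ℝ) (hT : 0 < T) (ψ : ℝ → ℝ) (hψ : ContDiff ℝ 1 ψ) (hψ0 : ψ 0 = 0)
    (hψ' : ∀ s ∈ Set.Icc 0 T, 0 < deriv ψ s)
    (σ : ℕ → ℝ → ℂ) (g : ℝ → ℂ)
    (hσ : ∀ i, 1 ≤ i → i ≤ m → ContinuousOn (σ i) (Set.Icc 0 T))
    (hg : ContinuousOn g (Set.Icc 0 T)) :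
    ∃ u : ℝ → ℂ,
      ContinuousOn u (Set.Icc 0 T) ∧
      (∀ t ∈ Set.Icc 0 T,
        u t + ∑ i ∈ Finset.Icc 1 m,
          σ i t * prabIPsi α (β 0 - β i) (θ 0 - θ i) ω 0 ψ u t = g t) ∧
      (∀ u' : ℝ → ℂ, ContinuousOn u' (Set.Icc 0 T) →
        (∀ t ∈ Set.Icc 0 T,
          u' t + ∑ i ∈ Finset.Icc 1 m,
            σ i t * prabIPsi α (β 0 - β i) (θ 0 - θ i) ω 0 ψ u' t = g t) →
        Set.EqOn u' u (Set.Icc 0 T)) ∧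
      TendstoUniformlyOn
        (fun N t => ∑ k ∈ Finset.range N, (-1 : ℂ) ^ k * (opAPsi α ω β θ m σ ψ)^[k] g t)
        u atTop (Set.Icc 0 T) := by
  classical
  have hsm : StrictMonoOn ψ (Icc 0 T) := IEq.psi_sm hT hψ hψ'
  set τ : ℝ → ℝ := fun x => max 0 (min x T) with hτdef
  have hτc : Continuous τ := continuous_const.max (continuous_id.min continuous_const)
  have hτmem : ∀ x, τ x ∈ Icc (0:ℝ) T := fun x =>
    ⟨le_max_left _ _, max_le hT.le (min_le_right _ _)⟩
  have hτid : ∀ x ∈ Icc (0:ℝ) T, τ x = x := fun x hx => by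
    simp only [hτdef]; rw [min_eq_left hx.2, max_eq_right hx.1]
  have hτidem : ∀ x, τ (τ x) = τ x := fun x => hτid _ (hτmem x)
  have hψmem : ∀ s ∈ Icc (0:ℝ) T, 0 ≤ ψ s ∧ ψ s ≤ ψ T := by
    intro s hs
    constructor
    · have := hsm.monotoneOn ⟨le_rfl, hT.le⟩ hs hs.1; rwa [hψ0] at this
    · exact hsm.monotoneOn hs ⟨hT.le, le_rfl⟩ hs.2
  have hP : 0 < ψ T := by
    have := hsm ⟨le_rfl, hT.le⟩ ⟨hT.le, le_rfl⟩ hT; rwa [hψ0] at this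
  -- δ
  set δ : ℝ := min ((β 0).re - (β 1).re) 1 with hδdef
  have hδ0 : 0 < δ := lt_min (sub_pos.2 (hmono 0 1 one_pos hm)) one_pos
  have hδ1 : δ ≤ 1 := min_le_right _ _
  have hβpos : ∀ i, 1 ≤ i → i ≤ m → 0 < (β 0 - β i).re := by
    intro i h1 h2
    rw [Complex.sub_re]
    have : (β i).re < (β 0).re := hmono 0 i (lt_of_lt_of_le one_pos h1) h2
    linarith
  have hδb : ∀ i, 1 ≤ i → i ≤ m → δ ≤ (β 0 - β i).re := by
    intro i h1 h2
    rw [Complex.sub_re]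
    have h3 : (β i).re ≤ (β 1).re := by
      rcases eq_or_lt_of_le h1 with h | h
      · rw [← h]
      · exact (hmono 1 i h h2).le
    have h4 := min_le_left ((β 0).re - (β 1).re) 1
    rw [← hδdef] at h4
    linarith
  -- R
  set R : ℝ := ‖ω‖ * max 1 ((ψ T + 1) ^ α.re) with hRdef
  have hR0 : 0 ≤ R := mul_nonneg (norm_nonneg _) (le_max_of_le_left zero_le_one)
  have hRb : ∀ r : ℝ, 0 < r → r ≤ ψ T + 1 → ‖ω * ((r:ℝ):ℂ) ^ α‖ ≤ R := by
    intro r hr hrQ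
    rw [norm_mul, hRdef]
    apply mul_le_mul_of_nonneg_left _ (norm_nonneg ω)
    have h1 : ‖((r:ℝ):ℂ) ^ α‖ = r ^ α.re := by
      rw [Complex.norm_cpow_eq_rpow_re_of_pos hr]
    rw [h1]
    rcases le_total r 1 with h | h
    · exact le_max_of_le_left (Real.rpow_le_one hr.le h hα.le)
    · exact le_max_of_le_right (Real.rpow_le_rpow hr.le hrQ hα.le)
  -- clamped data
  set σ' : ℕ → ℝ → ℂ := fun i x => if 1 ≤ i ∧ i ≤ m then σ i (τ x) else 0 with hσ'def
  have hσ'c : ∀ i, Continuous (σ' i) := by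
    intro i
    by_cases h : 1 ≤ i ∧ i ≤ m
    · simp only [hσ'def, if_pos h]
      exact (hσ i h.1 h.2).comp_continuous hτc hτmem
    · simp only [hσ'def, if_neg h]
      exact continuous_const
  have hσ'eq : ∀ i ∈ Finset.Icc 1 m, ∀ x ∈ Icc (0:ℝ) T, σ' i x = σ i x := by
    intro i hi x hx
    rw [Finset.mem_Icc] at hi
    simp only [hσ'def, if_pos hi, hτid x hx]
  have hσ'τ : ∀ i x, σ' i (τ x) = σ' i x := by
    intro i x
    simp only [hσ'def, hτidem]
  set g0 : ℝ → ℂ := fun x => g (τ x) with hg0def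
  have hg0c : Continuous g0 := hg.comp_continuous hτc hτmem
  have hg0eq : ∀ x ∈ Icc (0:ℝ) T, g0 x = g x := fun x hx => by
    simp only [hg0def, hτid x hx]
  have hg0τ : ∀ x, g0 (τ x) = g0 x := fun x => by simp only [hg0def, hτidem]
  obtain ⟨G₀, hG₀⟩ := isCompact_Icc.exists_bound_of_continuousOn
    (hg0c.continuousOn : ContinuousOn g0 (Icc (0:ℝ) T))
  set G : ℝ := max G₀ 0 with hGdef
  have hG0 : 0 ≤ G := le_max_right _ _
  have hGb : ∀ x, ‖g0 x‖ ≤ G := by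
    intro x
    have h1 : g0 x = g0 (τ x) := (hg0τ x).symm
    rw [h1]
    exact le_trans (hG₀ _ (hτmem x)) (le_max_left _ _)
  -- contexts
  have hCtx' : ∀ i : ℕ, ∃ M : ℝ, 0 ≤ M ∧
      ((1 ≤ i ∧ i ≤ m) → IEq.Ctx α (β 0 - β i) (θ 0 - θ i) ω T ψ δ R M) := by
    intro i
    by_cases h : 1 ≤ i ∧ i ≤ m
    · obtain ⟨M, hM0, hMb, hMLc⟩ := IEq.ml_aux α (θ 0 - θ i) (β 0 - β i) hα
        (hβpos i h.1 h.2) R hR0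
      exact ⟨M, hM0, fun _ => ⟨hα, hβpos i h.1 h.2, hT, hψ, hψ0, hψ', hδ0, hδ1,
        hδb i h.1 h.2, hM0, hRb, hMb, hMLc⟩⟩
    · exact ⟨0, le_rfl, fun hh => absurd hh h⟩
  choose Mf hMf0 hMfc using hCtx'
  -- σ bounds
  have hSex : ∀ i : ℕ, ∃ S : ℝ, 0 ≤ S ∧ ∀ x, ‖σ' i x‖ ≤ S := by
    intro i
    obtain ⟨S₀, hS₀⟩ := isCompact_Icc.exists_bound_of_continuousOn
      ((hσ'c i).continuousOn : ContinuousOn (σ' i) (Icc (0:ℝ) T))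
    refine ⟨max S₀ 0, le_max_right _ _, fun x => ?_⟩
    have h1 : σ' i x = σ' i (τ x) := (hσ'τ i x).symm
    rw [h1]
    exact le_trans (hS₀ _ (hτmem x)) (le_max_left _ _)
  choose Sf hSf0 hSfb using hSex
  set M' : ℕ → ℝ := fun i => Mf i * max 1 ((ψ T + 1) ^ ((β 0 - β i).re - δ)) with hM'def
  have hM'0 : ∀ i, 0 ≤ M' i := fun i =>
    mul_nonneg (hMf0 i) (le_max_of_le_left zero_le_one)
  set C : ℝ := ∑ i ∈ Finset.Icc 1 m, Sf i * M' i with hCdef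
  have hC0 : 0 ≤ C := Finset.sum_nonneg fun i _ => mul_nonneg (hSf0 i) (hM'0 i)
  -- the operator
  set Bop : (ℝ → ℂ) → ℝ → ℂ := fun w x => ∑ i ∈ Finset.Icc 1 m,
      σ' i x * prabIPsi α (β 0 - β i) (θ 0 - θ i) ω 0 ψ w (τ x) with hBopdef
  have hBopτ : ∀ w x, Bop w (τ x) = Bop w x := by
    intro w x
    simp only [hBopdef, hτidem, hσ'τ]
  -- congruence
  have hprabcongr : ∀ (β' θ' : ℂ) (w w' : ℝ → ℂ), EqOn w w' (Icc 0 T) →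
      ∀ t ∈ Icc (0:ℝ) T, prabIPsi α β' θ' ω 0 ψ w t = prabIPsi α β' θ' ω 0 ψ w' t := by
    intro β' θ' w w' hww t ht
    rw [IEq.prabIPsi_eq, IEq.prabIPsi_eq]
    apply intervalIntegral.integral_congr
    intro s hs
    rw [uIcc_of_le ht.1] at hs
    have hws : w s = w' s := hww ⟨hs.1, le_trans hs.2 ht.2⟩
    simp only [hws]
  have hC1 : ∀ (w w' : ℝ → ℂ), EqOn w w' (Icc 0 T) → ∀ t ∈ Icc (0:ℝ) T,
      opAPsi α ω β θ m σ ψ w t = Bop w' t := by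
    intro w w' hww t ht
    show (∑ i ∈ Finset.Icc 1 m, σ i t * prabIPsi α (β 0 - β i) (θ 0 - θ i) ω 0 ψ w t)
      = _
    simp only [hBopdef, hτid t ht]
    apply Finset.sum_congr rfl
    intro i hi
    rw [hσ'eq i hi t ht, hprabcongr _ _ w w' hww t ht]
  -- integrability helper
  have hWof : ∀ w : ℝ → ℂ, Continuous w → ∃ W : ℝ, 0 ≤ W ∧ ∀ s ∈ Icc (0:ℝ) T, ‖w s‖ ≤ W := by
    intro w hw
    obtain ⟨W₀, hW₀⟩ := isCompact_Icc.exists_bound_of_continuousOn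
      (hw.continuousOn : ContinuousOn w (Icc (0:ℝ) T))
    exact ⟨max W₀ 0, le_max_right _ _, fun s hs => le_trans (hW₀ s hs) (le_max_left _ _)⟩
  have hIint : ∀ i, (1 ≤ i ∧ i ≤ m) → ∀ (w : ℝ → ℂ), Continuous w → ∀ t ∈ Icc (0:ℝ) T,
      IntervalIntegrable (fun s => IEq.pker α (β 0 - β i) (θ 0 - θ i) ω (ψ t - ψ s) * w s
        * ((deriv ψ s : ℝ):ℂ)) volume 0 t := by
    intro i hi w hw t ht
    obtain ⟨W, hW0, hWb⟩ := hWof w hw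
    exact (hMfc i hi).integrand_intOn hw hW0 hWb ht
  -- linearity
  have hBsub : ∀ (w w' : ℝ → ℂ), Continuous w → Continuous w' → ∀ x,
      Bop w x - Bop w' x = Bop (fun s => w s - w' s) x := by
    intro w w' hw hw' x
    simp only [hBopdef, ← Finset.sum_sub_distrib]
    apply Finset.sum_congr rfl
    intro i hi
    rw [← mul_sub]
    congr 1
    rw [Finset.mem_Icc] at hi
    rw [IEq.prabIPsi_eq, IEq.prabIPsi_eq, IEq.prabIPsi_eq,
      ← intervalIntegral.integral_sub (hIint i hi w hw _ (hτmem x))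
        (hIint i hi w' hw' _ (hτmem x))]
    apply intervalIntegral.integral_congr
    intro s _
    ring
  have hBsmul : ∀ (a : ℂ) (w : ℝ → ℂ), Continuous w → ∀ x,
      Bop (fun s => a * w s) x = a * Bop w x := by
    intro a w hw x
    simp only [hBopdef, Finset.mul_sum]
    apply Finset.sum_congr rfl
    intro i hi
    rw [Finset.mem_Icc] at hi
    rw [IEq.prabIPsi_eq, IEq.prabIPsi_eq]
    rw [show (∫ s in (0:ℝ)..(τ x), IEq.pker α (β 0 - β i) (θ 0 - θ i) ω (ψ (τ x) - ψ s)
        * (a * w s) * ((deriv ψ s : ℝ):ℂ))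
      = ∫ s in (0:ℝ)..(τ x), a * (IEq.pker α (β 0 - β i) (θ 0 - θ i) ω (ψ (τ x) - ψ s)
        * w s * ((deriv ψ s : ℝ):ℂ)) from intervalIntegral.integral_congr fun s _ => by ring]
    rw [intervalIntegral.integral_const_mul]
    ring
  have hBsum : ∀ (N : ℕ) (F : ℕ → ℝ → ℂ), (∀ k, Continuous (F k)) → ∀ x,
      Bop (fun s => ∑ k ∈ Finset.range N, F k s) x
        = ∑ k ∈ Finset.range N, Bop (F k) x := by
    intro N F hF x
    simp only [hBopdef]
    rw [Finset.sum_comm]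
    apply Finset.sum_congr rfl
    intro i hi
    rw [Finset.mem_Icc] at hi
    rw [← Finset.mul_sum]
    congr 1
    rw [IEq.prabIPsi_eq]
    rw [show (∫ s in (0:ℝ)..(τ x), IEq.pker α (β 0 - β i) (θ 0 - θ i) ω (ψ (τ x) - ψ s)
        * (∑ k ∈ Finset.range N, F k s) * ((deriv ψ s : ℝ):ℂ))
      = ∫ s in (0:ℝ)..(τ x), ∑ k ∈ Finset.range N,
          IEq.pker α (β 0 - β i) (θ 0 - θ i) ω (ψ (τ x) - ψ s)
            * F k s * ((deriv ψ s : ℝ):ℂ) from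
        intervalIntegral.integral_congr fun s _ => by
          rw [Finset.mul_sum, Finset.sum_mul]]
    rw [intervalIntegral.integral_finset_sum
      (fun k _ => hIint i hi (F k) (hF k) _ (hτmem x))]
    apply Finset.sum_congr rfl
    intro k _
    rw [IEq.prabIPsi_eq]
  -- E1
  have hE1 : ∀ (w : ℝ → ℂ), Continuous w → ∀ (c γ : ℝ), 0 ≤ c → 0 ≤ γ →
      (∀ s ∈ Icc (0:ℝ) T, ‖w s‖ ≤ c * ψ s ^ γ) → ∀ t ∈ Icc (0:ℝ) T,
      ‖Bop w t‖ ≤ C * c * IEq.rbeta δ (γ + 1) * ψ t ^ (γ + δ) := by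
    intro w hw c γ hcn hγ hwb t ht
    simp only [hBopdef, hτid t ht]
    refine le_trans (norm_sum_le _ _) ?_
    have h1 : ∀ i ∈ Finset.Icc 1 m,
        ‖σ' i t * prabIPsi α (β 0 - β i) (θ 0 - θ i) ω 0 ψ w t‖
          ≤ Sf i * M' i * (c * IEq.rbeta δ (γ + 1) * ψ t ^ (γ + δ)) := by
      intro i hi
      rw [Finset.mem_Icc] at hi
      rw [norm_mul]
      have h2 := (hMfc i hi).prab_norm_le hw hcn hγ hwb ht
      have h3 : Mf i * max 1 ((ψ T + 1) ^ ((β 0 - β i).re - δ)) * c * IEq.rbeta δ (γ + 1)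
          * ψ t ^ (γ + δ) = M' i * (c * IEq.rbeta δ (γ + 1) * ψ t ^ (γ + δ)) := by
        rw [hM'def]; ring
      rw [h3] at h2
      calc ‖σ' i t‖ * ‖prabIPsi α (β 0 - β i) (θ 0 - θ i) ω 0 ψ w t‖
          ≤ Sf i * (M' i * (c * IEq.rbeta δ (γ + 1) * ψ t ^ (γ + δ))) :=
            mul_le_mul (hSfb i t) h2 (norm_nonneg _) (hSf0 i)
        _ = Sf i * M' i * (c * IEq.rbeta δ (γ + 1) * ψ t ^ (γ + δ)) := by ring
    refine le_trans (Finset.sum_le_sum h1) ?_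
    rw [← Finset.sum_mul]
    exact le_of_eq (by rw [← hCdef]; ring)
  -- continuity of Bop
  have hBc : ∀ w : ℝ → ℂ, Continuous w → Continuous (Bop w) := by
    intro w hw
    have hinner : ContinuousOn (fun y => ∑ i ∈ Finset.Icc 1 m,
        σ' i y * prabIPsi α (β 0 - β i) (θ 0 - θ i) ω 0 ψ w y) (Icc 0 T) := by
      apply continuousOn_finset_sum
      intro i hi
      rw [Finset.mem_Icc] at hi
      exact ((hσ'c i).continuousOn).mul ((hMfc i hi).prab_contOn hw)
    have heq : Bop w = fun x => (fun y => ∑ i ∈ Finset.Icc 1 m,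
        σ' i y * prabIPsi α (β 0 - β i) (θ 0 - θ i) ω 0 ψ w y) (τ x) := by
      funext x
      simp only [hBopdef]
      exact Finset.sum_congr rfl fun i _ => by rw [hσ'τ]
    rw [heq]
    exact hinner.comp_continuous hτc hτmem
  -- iterates
  set Fk : ℕ → ℝ → ℂ := fun k => Bop^[k] g0 with hFkdef
  have hFsucc : ∀ k, Fk (k+1) = Bop (Fk k) := fun k => Function.iterate_succ_apply' Bop k g0
  have hFc : ∀ k, Continuous (Fk k) := by
    intro k
    induction k with
    | zero => exact hg0c
    | succ k ih => rw [hFsucc k]; exact hBc _ ih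
  have hFτ : ∀ k x, Fk k (τ x) = Fk k x := by
    intro k x
    cases k with
    | zero => exact hg0τ x
    | succ k => rw [hFsucc k, hBopτ]
  set bk : ℕ → ℝ := fun k => ∏ j ∈ Finset.range k, IEq.rbeta δ ((j:ℝ)*δ+1) with hbkdef
  have hbk0 : ∀ k, 0 ≤ bk k := fun k => Finset.prod_nonneg fun j _ => IEq.rbeta_nonneg
  have hbksucc : ∀ k, bk (k+1) = bk k * IEq.rbeta δ ((k:ℝ)*δ+1) := fun k =>
    Finset.prod_range_succ _ k
  have hFb : ∀ k : ℕ, ∀ t ∈ Icc (0:ℝ) T, ‖Fk k t‖ ≤ G * C^k * bk k * ψ t ^ ((k:ℝ)*δ) := by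
    intro k
    induction k with
    | zero =>
      intro t ht
      have h1 : bk 0 = 1 := Finset.prod_range_zero _
      rw [h1, pow_zero, Nat.cast_zero, zero_mul, Real.rpow_zero, mul_one, mul_one, mul_one]
      exact hGb t
    | succ k ih =>
      intro t ht
      rw [hFsucc k]
      have hcn : 0 ≤ G * C^k * bk k :=
        mul_nonneg (mul_nonneg hG0 (pow_nonneg hC0 k)) (hbk0 k)
      have hb := hE1 (Fk k) (hFc k) (G*C^k*bk k) ((k:ℝ)*δ) hcn (by positivity) ih t ht
      refine le_trans hb (le_of_eq ?_)
      rw [hbksucc]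
      have hcast : (((k+1:ℕ)):ℝ)*δ = (k:ℝ)*δ + δ := by push_cast; ring
      rw [hcast, pow_succ]
      ring
  -- summability
  set dk : ℕ → ℝ := fun k => C^k * bk k * (ψ T) ^ ((k:ℝ)*δ) with hdkdef
  have hdk0 : ∀ k, 0 ≤ dk k := fun k =>
    mul_nonneg (mul_nonneg (pow_nonneg hC0 k) (hbk0 k)) (Real.rpow_nonneg hP.le _)
  have hZpos : 0 < 2*(C*(ψ T)^δ + 1) := by
    have h1 : 0 ≤ C*(ψ T)^δ := mul_nonneg hC0 (Real.rpow_nonneg hP.le δ)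
    linarith
  have hdsum : Summable dk := by
    apply summable_of_ratio_norm_eventually_le (r := 1/2) (by norm_num)
    have hx : Tendsto (fun k : ℕ => (k:ℝ)*δ+1) atTop atTop :=
      tendsto_atTop_add_const_right _ _
        (Tendsto.atTop_mul_const hδ0 tendsto_natCast_atTop_atTop)
    have hsm2 := (IEq.tendsto_rbeta δ hδ0).comp hx
    have hev : ∀ᶠ k : ℕ in atTop, IEq.rbeta δ ((k:ℝ)*δ+1) ≤ 1 / (2*(C*(ψ T)^δ + 1)) := by
      filter_upwards [hsm2.eventually (eventually_le_nhds
        (show (0:ℝ) < 1 / (2*(C*(ψ T)^δ + 1)) from div_pos one_pos hZpos))] with k hk using hk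
    filter_upwards [hev] with k hk
    rw [Real.norm_of_nonneg (hdk0 _), Real.norm_of_nonneg (hdk0 _)]
    have hstep : dk (k+1) = dk k * (C * IEq.rbeta δ ((k:ℝ)*δ+1) * (ψ T)^δ) := by
      simp only [hdkdef]
      rw [hbksucc, pow_succ]
      have hcast : (((k+1:ℕ)):ℝ)*δ = (k:ℝ)*δ + δ := by push_cast; ring
      rw [hcast, Real.rpow_add hP]
      ring
    rw [hstep]
    have h8 : C * IEq.rbeta δ ((k:ℝ)*δ+1) * (ψ T)^δ ≤ 1/2 := by
      have h9 : C * IEq.rbeta δ ((k:ℝ)*δ+1) * (ψ T)^δ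
          ≤ C * (1 / (2*(C*(ψ T)^δ + 1))) * (ψ T)^δ := by
        apply mul_le_mul_of_nonneg_right _ (Real.rpow_nonneg hP.le δ)
        exact mul_le_mul_of_nonneg_left hk hC0
      refine le_trans h9 ?_
      have h10 : C * (1 / (2*(C*(ψ T)^δ + 1))) * (ψ T)^δ
          = (C * (ψ T)^δ) / (2*(C*(ψ T)^δ + 1)) := by ring
      rw [h10, div_le_iff₀ hZpos]
      have h11 : 0 ≤ C*(ψ T)^δ := mul_nonneg hC0 (Real.rpow_nonneg hP.le δ)
      linarith
    calc dk k * (C * IEq.rbeta δ ((k:ℝ)*δ+1) * (ψ T)^δ) ≤ dk k * (1/2) :=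
        mul_le_mul_of_nonneg_left h8 (hdk0 k)
      _ = 1/2 * dk k := by ring
  -- the solution
  set u : ℝ → ℂ := fun t => ∑' k : ℕ, (-1:ℂ)^k * Fk k t with hudef
  have hnormb : ∀ k : ℕ, ∀ t ∈ Icc (0:ℝ) T, ‖(-1:ℂ)^k * Fk k t‖ ≤ G * dk k := by
    intro k t ht
    rw [norm_mul, norm_pow, norm_neg, norm_one, one_pow, one_mul]
    refine le_trans (hFb k t ht) ?_
    have h1 : ψ t ^ ((k:ℝ)*δ) ≤ (ψ T) ^ ((k:ℝ)*δ) :=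
      Real.rpow_le_rpow (hψmem t ht).1 (hψmem t ht).2 (by positivity)
    calc G*C^k*bk k*ψ t ^ ((k:ℝ)*δ) ≤ G*C^k*bk k*(ψ T) ^ ((k:ℝ)*δ) :=
        mul_le_mul_of_nonneg_left h1
          (mul_nonneg (mul_nonneg hG0 (pow_nonneg hC0 k)) (hbk0 k))
      _ = G * dk k := by rw [hdkdef]; ring
  have hTU : TendstoUniformlyOn (fun N t => ∑ k ∈ Finset.range N, (-1:ℂ)^k * Fk k t)
      u atTop (Icc 0 T) :=
    tendstoUniformlyOn_tsum_nat (hdsum.mul_left G) (fun k t ht => hnormb k t ht)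
  have huτ : ∀ x, u (τ x) = u x := by
    intro x
    simp only [hudef]
    exact tsum_congr fun k => by rw [hFτ]
  set SN : ℕ → ℝ → ℂ := fun N t => ∑ k ∈ Finset.range N, (-1:ℂ)^k * Fk k t with hSNdef
  have hSNc : ∀ N, Continuous (SN N) := fun N =>
    continuous_finset_sum _ fun k _ => continuous_const.mul (hFc k)
  have huc : Continuous u := by
    have h1 : ContinuousOn u (Icc 0 T) :=
      hTU.continuousOn (Eventually.of_forall fun N => (hSNc N).continuousOn).frequently
    have h2 : Continuous fun x => u (τ x) := h1.comp_continuous hτc hτmem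
    have h3 : (fun x => u (τ x)) = u := funext huτ
    rwa [h3] at h2
  -- recursion for partial sums
  have hrec : ∀ (N : ℕ) (t : ℝ), SN (N+1) t + Bop (SN N) t = g0 t := by
    intro N t
    have h1 : Bop (SN N) t = ∑ k ∈ Finset.range N, (-1:ℂ)^k * Fk (k+1) t := by
      have h2 := hBsum N (fun k s => (-1:ℂ)^k * Fk k s)
        (fun k => continuous_const.mul (hFc k)) t
      rw [show Bop (SN N) t
          = Bop (fun s => ∑ k ∈ Finset.range N, (-1:ℂ)^k * Fk k s) t from rfl, h2]
      apply Finset.sum_congr rfl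
      intro k _
      rw [hBsmul ((-1:ℂ)^k) (Fk k) (hFc k) t]
      rw [← congrFun (hFsucc k) t]
    rw [h1]
    show (∑ k ∈ Finset.range (N+1), (-1:ℂ)^k * Fk k t) + _ = _
    rw [Finset.sum_range_succ' (fun k => (-1:ℂ)^k * Fk k t) N]
    have hz : ∀ k ∈ Finset.range N,
        (-1:ℂ)^(k+1) * Fk (k+1) t + (-1:ℂ)^k * Fk (k+1) t = 0 := fun k _ => by
      rw [pow_succ]; ring
    have hsplit : (∑ k ∈ Finset.range N, (-1:ℂ)^(k+1) * Fk (k+1) t) + (-1:ℂ)^0 * Fk 0 t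
        + ∑ k ∈ Finset.range N, (-1:ℂ)^k * Fk (k+1) t
        = (∑ k ∈ Finset.range N,
            ((-1:ℂ)^(k+1) * Fk (k+1) t + (-1:ℂ)^k * Fk (k+1) t)) + Fk 0 t := by
      rw [Finset.sum_add_distrib, pow_zero, one_mul]
      ring
    rw [hsplit, Finset.sum_eq_zero hz, zero_add]
    rfl
  -- equation for u
  have hEqB : ∀ t ∈ Icc (0:ℝ) T, u t + Bop u t = g0 t := by
    intro t ht
    have hlim1 : Tendsto (fun N => SN (N+1) t) atTop (𝓝 (u t)) :=
      (hTU.tendsto_at ht).comp (tendsto_add_atTop_nat 1)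
    have hKpos : (0:ℝ) < C * IEq.rbeta δ 1 * (ψ T)^δ + 1 := by
      have h1 : 0 ≤ C * IEq.rbeta δ 1 * (ψ T)^δ :=
        mul_nonneg (mul_nonneg hC0 IEq.rbeta_nonneg) (Real.rpow_nonneg hP.le δ)
      linarith
    have hlim2 : Tendsto (fun N => Bop (SN N) t) atTop (𝓝 (Bop u t)) := by
      rw [Metric.tendsto_atTop]
      intro ε' hε'
      have hεK : 0 < ε' / (C * IEq.rbeta δ 1 * (ψ T)^δ + 1) := div_pos hε' hKpos
      obtain ⟨N₀, hN₀⟩ := (Metric.tendstoUniformlyOn_iff.1 hTU _ hεK).exists_forall_of_atTop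
      refine ⟨N₀, fun N hN => ?_⟩
      have hb : ∀ s ∈ Icc (0:ℝ) T, ‖SN N s - u s‖
          ≤ (ε' / (C * IEq.rbeta δ 1 * (ψ T)^δ + 1)) * ψ s ^ (0:ℝ) := by
        intro s hs
        rw [Real.rpow_zero, mul_one]
        have h2 := hN₀ N hN s hs
        rw [dist_comm, dist_eq_norm] at h2
        exact h2.le
      have hdiffc : Continuous (fun s => SN N s - u s) := (hSNc N).sub huc
      have h3 := hE1 _ hdiffc (ε' / (C * IEq.rbeta δ 1 * (ψ T)^δ + 1)) 0 hεK.le le_rfl hb t ht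
      rw [dist_eq_norm, hBsub (SN N) u (hSNc N) huc t]
      refine lt_of_le_of_lt h3 ?_
      have h5 : ψ t ^ ((0:ℝ)+δ) ≤ (ψ T)^δ := by
        rw [zero_add]
        exact Real.rpow_le_rpow (hψmem t ht).1 (hψmem t ht).2 hδ0.le
      have h7 : C * (ε' / (C * IEq.rbeta δ 1 * (ψ T)^δ + 1)) * IEq.rbeta δ (0+1)
            * ψ t ^ ((0:ℝ)+δ)
          ≤ (C * IEq.rbeta δ 1 * (ψ T)^δ)
            * (ε' / (C * IEq.rbeta δ 1 * (ψ T)^δ + 1)) := by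
        rw [show (0:ℝ)+1 = 1 from zero_add 1]
        calc C * (ε' / (C * IEq.rbeta δ 1 * (ψ T)^δ + 1)) * IEq.rbeta δ 1 * ψ t ^ ((0:ℝ)+δ)
            = (C * IEq.rbeta δ 1 * ψ t ^ ((0:ℝ)+δ))
              * (ε' / (C * IEq.rbeta δ 1 * (ψ T)^δ + 1)) := by ring
          _ ≤ (C * IEq.rbeta δ 1 * (ψ T)^δ)
              * (ε' / (C * IEq.rbeta δ 1 * (ψ T)^δ + 1)) :=
            mul_le_mul_of_nonneg_right
              (mul_le_mul_of_nonneg_left h5 (mul_nonneg hC0 IEq.rbeta_nonneg)) hεK.le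
      refine lt_of_le_of_lt h7 ?_
      have h8 : (C * IEq.rbeta δ 1 * (ψ T)^δ) < C * IEq.rbeta δ 1 * (ψ T)^δ + 1 := by
        linarith
      calc (C * IEq.rbeta δ 1 * (ψ T)^δ) * (ε' / (C * IEq.rbeta δ 1 * (ψ T)^δ + 1))
          < (C * IEq.rbeta δ 1 * (ψ T)^δ + 1)
            * (ε' / (C * IEq.rbeta δ 1 * (ψ T)^δ + 1)) :=
            mul_lt_mul_of_pos_right h8 hεK
        _ = ε' := by
            rw [mul_comm, div_mul_cancel₀ _ (ne_of_gt hKpos)]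
    have hconst : (fun N => SN (N+1) t + Bop (SN N) t) = fun _ => g0 t :=
      funext fun N => hrec N t
    have hlim3 : Tendsto (fun N => SN (N+1) t + Bop (SN N) t) atTop
        (𝓝 (u t + Bop u t)) := hlim1.add hlim2
    rw [hconst] at hlim3
    exact (tendsto_nhds_unique hlim3 tendsto_const_nhds)
  have hEqn : ∀ t ∈ Icc (0:ℝ) T, u t + ∑ i ∈ Finset.Icc 1 m,
      σ i t * prabIPsi α (β 0 - β i) (θ 0 - θ i) ω 0 ψ u t = g t := by
    intro t ht
    have h1 : (∑ i ∈ Finset.Icc 1 m,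
        σ i t * prabIPsi α (β 0 - β i) (θ 0 - θ i) ω 0 ψ u t) = Bop u t :=
      hC1 u u (fun _ _ => rfl) t ht
    rw [h1, hEqB t ht, hg0eq t ht]
  -- iterate congruence
  have hC2 : ∀ k : ℕ, EqOn ((opAPsi α ω β θ m σ ψ)^[k] g) (Fk k) (Icc 0 T) := by
    intro k
    induction k with
    | zero => intro t ht; exact (hg0eq t ht).symm
    | succ k ih =>
      intro t ht
      rw [Function.iterate_succ_apply']
      have h1 : opAPsi α ω β θ m σ ψ ((opAPsi α ω β θ m σ ψ)^[k] g) t = Bop (Fk k) t :=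
        hC1 _ _ ih t ht
      rw [h1, ← congrFun (hFsucc k) t]
  -- uniqueness
  have huniq : ∀ u' : ℝ → ℂ, ContinuousOn u' (Icc 0 T) →
      (∀ t ∈ Icc (0:ℝ) T, u' t + ∑ i ∈ Finset.Icc 1 m,
        σ i t * prabIPsi α (β 0 - β i) (θ 0 - θ i) ω 0 ψ u' t = g t) →
      EqOn u' u (Icc 0 T) := by
    intro u' hu'c hu'eq
    set v : ℝ → ℂ := fun x => u' (τ x) - u x with hvdef
    have hu'τc : Continuous (fun x => u' (τ x)) := hu'c.comp_continuous hτc hτmem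
    have hvc : Continuous v := hu'τc.sub huc
    have hu'τ : EqOn u' (fun x => u' (τ x)) (Icc 0 T) := fun x hx => by
      show u' x = u' (τ x)
      rw [hτid x hx]
    have hveq : ∀ t ∈ Icc (0:ℝ) T, v t = - Bop v t := by
      intro t ht
      have e1 : (∑ i ∈ Finset.Icc 1 m,
          σ i t * prabIPsi α (β 0 - β i) (θ 0 - θ i) ω 0 ψ u' t)
          = Bop (fun x => u' (τ x)) t := hC1 u' _ hu'τ t ht
      have e2 : (∑ i ∈ Finset.Icc 1 m,
          σ i t * prabIPsi α (β 0 - β i) (θ 0 - θ i) ω 0 ψ u t) = Bop u t :=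
        hC1 u u (fun _ _ => rfl) t ht
      have e3 := hu'eq t ht
      have e4 := hEqn t ht
      have e5 : Bop (fun x => u' (τ x)) t - Bop u t = Bop v t :=
        hBsub _ u hu'τc huc t
      have e6 : v t = u' t - u t := by simp only [hvdef, hτid t ht]
      rw [e1] at e3
      rw [e2] at e4
      rw [e6]
      linear_combination e3 - e4 - e5
    obtain ⟨V, hV0, hVb⟩ := hWof v hvc
    have hvk : ∀ k : ℕ, ∀ t ∈ Icc (0:ℝ) T, ‖v t‖ ≤ V * C^k * bk k * ψ t ^ ((k:ℝ)*δ) := by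
      intro k
      induction k with
      | zero =>
        intro t ht
        have h1 : bk 0 = 1 := Finset.prod_range_zero _
        rw [h1, pow_zero, Nat.cast_zero, zero_mul, Real.rpow_zero, mul_one, mul_one, mul_one]
        exact hVb t ht
      | succ k ih =>
        intro t ht
        rw [hveq t ht, norm_neg]
        have hcn : 0 ≤ V * C^k * bk k :=
          mul_nonneg (mul_nonneg hV0 (pow_nonneg hC0 k)) (hbk0 k)
        have hb := hE1 v hvc (V*C^k*bk k) ((k:ℝ)*δ) hcn (by positivity) ih t ht
        refine le_trans hb (le_of_eq ?_)
        rw [hbksucc]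
        have hcast : (((k+1:ℕ)):ℝ)*δ = (k:ℝ)*δ + δ := by push_cast; ring
        rw [hcast, pow_succ]
        ring
    intro t ht
    have hb2 : ∀ k : ℕ, ‖v t‖ ≤ V * dk k := by
      intro k
      refine le_trans (hvk k t ht) ?_
      have h1 : ψ t ^ ((k:ℝ)*δ) ≤ (ψ T) ^ ((k:ℝ)*δ) :=
        Real.rpow_le_rpow (hψmem t ht).1 (hψmem t ht).2 (by positivity)
      calc V*C^k*bk k*ψ t ^ ((k:ℝ)*δ) ≤ V*C^k*bk k*(ψ T) ^ ((k:ℝ)*δ) :=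
          mul_le_mul_of_nonneg_left h1
            (mul_nonneg (mul_nonneg hV0 (pow_nonneg hC0 k)) (hbk0 k))
        _ = V * dk k := by rw [hdkdef]; ring
    have hlim : Tendsto (fun k => V * dk k) atTop (𝓝 0) := by
      have := hdsum.tendsto_atTop_zero.const_mul V
      simpa using this
    have hle0 : ‖v t‖ ≤ 0 := ge_of_tendsto' hlim hb2
    have hv0 : v t = 0 := norm_le_zero_iff.1 hle0
    have e6 : v t = u' t - u t := by simp only [hvdef, hτid t ht]
    rw [e6] at hv0
    exact sub_eq_zero.1 hv0
  refine ⟨u, huc.continuousOn, hEqn, huniq, ?_⟩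
  exact hTU.congr (Eventually.of_forall fun N t ht =>
    Finset.sum_congr rfl fun k _ => by rw [hC2 k ht])

end
end
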